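/- arXiv:2201.07596 — 9 statements merged into one kernel-verified Lean document; each statement's English description precedes it below -/
import Mathlib

section
/- Let M(Σ,Ω) = (1 - uΣ)²/Ω_V with u = λ/√6 and Ω_V = 1 - Σ² - Ω > 0. Then along solutions of the system, M' = -[(6(Σ-u)² + (3γ-λ²)Ω)/(1-uΣ)]·M. In particular, if 3γ > λ² and λ² < 6, then M is strictly decreasing along any interior orbit (Ω_V > 0, Ω > 0) except at the fixed point P = (u, 0). -/
/-- Along interior solutions, `M = (1-uΣ)²/Ω_V` with `u = λ/√6` satisfies
`M' = -[(6(Σ-u)² + (3γ-λ²)Ω)/(1-uΣ)]·M`; in particular if `3γ > λ²` then `M' < 0`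
along any interior orbit. -/
theorem stmt_6 (lam gam : ℝ) (hl : 0 ≤ lam) (hl6 : lam ^ 2 < 6)
    (hg : 0 < gam) (hg2 : gam < 2)
    (S O : ℝ → ℝ)
    (hS : ∀ N, HasDerivAt S (-(2 - (-1 + 3 * S N ^ 2 + 3 / 2 * gam * O N)) * S N
        + Real.sqrt (3 / 2) * lam * (1 - S N ^ 2 - O N)) N)
    (hO : ∀ N, HasDerivAt O
        ((2 * (1 + (-1 + 3 * S N ^ 2 + 3 / 2 * gam * O N)) - 3 * gam) * O N) N)
    (N : ℝ) (hint : S N ^ 2 + O N < 1) (hOp : 0 < O N) :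
    HasDerivAt (fun N => (1 - lam / Real.sqrt 6 * S N) ^ 2 / (1 - S N ^ 2 - O N))
      (-((6 * (S N - lam / Real.sqrt 6) ^ 2 + (3 * gam - lam ^ 2) * O N)
          / (1 - lam / Real.sqrt 6 * S N))
        * ((1 - lam / Real.sqrt 6 * S N) ^ 2 / (1 - S N ^ 2 - O N))) N ∧
    (lam ^ 2 < 3 * gam →
      -((6 * (S N - lam / Real.sqrt 6) ^ 2 + (3 * gam - lam ^ 2) * O N)
          / (1 - lam / Real.sqrt 6 * S N))
        * ((1 - lam / Real.sqrt 6 * S N) ^ 2 / (1 - S N ^ 2 - O N)) < 0) := by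
  have ht0 : (0:ℝ) < Real.sqrt 6 := Real.sqrt_pos.2 (by norm_num)
  have ht2 : Real.sqrt 6 ^ 2 = 6 := Real.sq_sqrt (by norm_num)
  have hs : Real.sqrt (3/2) = 3 / Real.sqrt 6 := by
    rw [eq_div_iff ht0.ne', ← Real.sqrt_mul (by norm_num),
      show (3:ℝ)/2*6 = 3^2 by norm_num, Real.sqrt_sq (by norm_num)]
  set u : ℝ := lam / Real.sqrt 6 with hu
  have hu0 : 0 ≤ u := div_nonneg hl ht0.le
  have hu1 : u ^ 2 < 1 := by
    rw [hu, div_pow, ht2, div_lt_one (by norm_num)]; exact hl6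
  have hS2 : S N ^ 2 < 1 := by nlinarith
  have huS : 0 < 1 - u * S N := by nlinarith [sq_nonneg (u - S N)]
  have hV : 0 < 1 - S N ^ 2 - O N := by linarith
  have hlam : lam = u * Real.sqrt 6 := by rw [hu, div_mul_cancel₀ _ ht0.ne']
  have h1 : HasDerivAt (fun N => (1 - u * S N) ^ 2)
      (2 * (1 - u * S N) ^ 1 * (-(u * (-(2 - (-1 + 3 * S N ^ 2 + 3 / 2 * gam * O N)) * S N
        + Real.sqrt (3 / 2) * lam * (1 - S N ^ 2 - O N))))) N :=
    (((hS N).const_mul u).const_sub 1).pow 2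
  have h2 : HasDerivAt (fun N => 1 - S N ^ 2 - O N)
      (0 - 2 * S N ^ 1 * (-(2 - (-1 + 3 * S N ^ 2 + 3 / 2 * gam * O N)) * S N
        + Real.sqrt (3 / 2) * lam * (1 - S N ^ 2 - O N))
        - (2 * (1 + (-1 + 3 * S N ^ 2 + 3 / 2 * gam * O N)) - 3 * gam) * O N) N := by
    exact (((hasDerivAt_const N (1:ℝ)).sub ((hS N).pow 2)).sub (hO N))
  have hd := h1.div h2 hV.ne'
  constructor
  · have hs3 : Real.sqrt (3/2) * lam = 3 * u := by
      rw [hs, hlam]; field_simp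
    have hl2 : lam ^ 2 = 6 * u ^ 2 := by rw [hlam, mul_pow, ht2]; ring
    refine hd.congr_deriv ?_
    rw [hs3, hl2]
    field_simp
    ring
  · intro h3g
    have hnum : 0 < 6 * (S N - u) ^ 2 + (3 * gam - lam ^ 2) * O N := by nlinarith [sq_nonneg (S N - u)]
    have : 0 < (6 * (S N - u) ^ 2 + (3 * gam - lam ^ 2) * O N) / (1 - u * S N)
        * ((1 - u * S N) ^ 2 / (1 - S N ^ 2 - O N)) := by positivity
    linarith
end

section
/- Let M(Σ,Ω) = (1 - uΣ)²/Ω_V with u = λ/√6, λ² < 6. On the interior state space {Σ² + Ω < 1, Ω > 0} with 3γ ≥ λ², M attains its infimum value over the closure of the interior, and that infimum equals 1 - u², attained at the point (u, 0). -/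
/-- The function `M = (1-uΣ)²/Ω_V`, `u = λ/√6` with `λ² < 6`, attains its infimum
over the state space (where `Ω_V > 0`) at the point `(u,0)`, with value `1 - u²`. -/
theorem stmt_7 (lam : ℝ) (hl : 0 ≤ lam) (hl6 : lam ^ 2 < 6) :
    IsLeast ((fun p : ℝ × ℝ => (1 - lam / Real.sqrt 6 * p.1) ^ 2 / (1 - p.1 ^ 2 - p.2)) ''
        {p : ℝ × ℝ | p.1 ^ 2 + p.2 ≤ 1 ∧ 0 ≤ p.2 ∧ 0 < 1 - p.1 ^ 2 - p.2})
      (1 - (lam / Real.sqrt 6) ^ 2) ∧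
    (fun p : ℝ × ℝ => (1 - lam / Real.sqrt 6 * p.1) ^ 2 / (1 - p.1 ^ 2 - p.2))
      (lam / Real.sqrt 6, 0) = 1 - (lam / Real.sqrt 6) ^ 2 := by
  set u := lam / Real.sqrt 6 with hu
  have h6 : (0:ℝ) < Real.sqrt 6 := Real.sqrt_pos.mpr (by norm_num)
  have hu2 : u ^ 2 = lam ^ 2 / 6 := by
    rw [hu, div_pow, Real.sq_sqrt (by norm_num : (6:ℝ) ≥ 0)]
  have hu1 : u ^ 2 < 1 := by rw [hu2]; linarith
  have hval : (1 - u * u) ^ 2 / (1 - u ^ 2 - 0) = 1 - u ^ 2 := by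
    have h : (1:ℝ) - u ^ 2 ≠ 0 := by nlinarith
    field_simp
    ring
  refine ⟨⟨⟨(u, 0), ⟨show u ^ 2 + 0 ≤ 1 by nlinarith, le_refl 0, show (0:ℝ) < 1 - u ^ 2 - 0 by nlinarith⟩, hval⟩, ?_⟩, hval⟩
  rintro x ⟨⟨s, w⟩, ⟨h1, h2, h3⟩, rfl⟩
  simp only at h3 ⊢
  rw [le_div_iff₀ h3]
  nlinarith [sq_nonneg (s - u), sq_nonneg (1 - u * s)]
end

section
/- In the case γ = λ²/3 (so 3γ - λ² = 0), the function M = (1-uΣ)²/Ω_V with u = λ/√6 satisfies M' = -[6(Σ-u)²/(1-uΣ)]M ≤ 0 along solutions, with equality exactly on the line Σ = u; moreover, along solutions, at points with Σ = u and Ω > 0 one has M'' = 0 and M''' = -108 Ω² u²(1-u²)³/Ω_V < 0 (for u ≠ 0), so solutions only pass through inflection points of M on {Σ = u, Ω > 0}. -/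
set_option maxHeartbeats 2000000 in
/-- Bifurcation case `γ = λ²/3`: along solutions, `M = (1-uΣ)²/Ω_V` with `u = λ/√6`
satisfies `M' = -[6(Σ-u)²/(1-uΣ)]M ≤ 0`, with equality exactly when `Σ = u`; moreover at
points with `Σ = u` and `Ω > 0` one has `M'' = 0` and
`M''' = -108 Ω² u² (1-u²)³ / Ω_V < 0`. -/
theorem stmt_8 (lam gam : ℝ) (hl : 0 < lam) (hl6 : lam ^ 2 < 6) (hbif : gam = lam ^ 2 / 3)
    (S O : ℝ → ℝ)
    (hS : ∀ N, HasDerivAt S (-(2 - (-1 + 3 * S N ^ 2 + 3 / 2 * gam * O N)) * S N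
        + Real.sqrt (3 / 2) * lam * (1 - S N ^ 2 - O N)) N)
    (hO : ∀ N, HasDerivAt O
        ((2 * (1 + (-1 + 3 * S N ^ 2 + 3 / 2 * gam * O N)) - 3 * gam) * O N) N) :
    ∀ N, S N ^ 2 + O N < 1 → 0 < O N →
      (deriv (fun N => (1 - lam / Real.sqrt 6 * S N) ^ 2 / (1 - S N ^ 2 - O N)) N
          = -(6 * (S N - lam / Real.sqrt 6) ^ 2 / (1 - lam / Real.sqrt 6 * S N))
            * ((1 - lam / Real.sqrt 6 * S N) ^ 2 / (1 - S N ^ 2 - O N)) ∧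
        deriv (fun N => (1 - lam / Real.sqrt 6 * S N) ^ 2 / (1 - S N ^ 2 - O N)) N ≤ 0 ∧
        (deriv (fun N => (1 - lam / Real.sqrt 6 * S N) ^ 2 / (1 - S N ^ 2 - O N)) N = 0
          ↔ S N = lam / Real.sqrt 6)) ∧
      (S N = lam / Real.sqrt 6 →
        deriv^[2] (fun N => (1 - lam / Real.sqrt 6 * S N) ^ 2 / (1 - S N ^ 2 - O N)) N = 0 ∧
        deriv^[3] (fun N => (1 - lam / Real.sqrt 6 * S N) ^ 2 / (1 - S N ^ 2 - O N)) N
          = -(108 * (O N) ^ 2 * (lam / Real.sqrt 6) ^ 2 * (1 - (lam / Real.sqrt 6) ^ 2) ^ 3)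
            / (1 - S N ^ 2 - O N) ∧
        deriv^[3] (fun N => (1 - lam / Real.sqrt 6 * S N) ^ 2 / (1 - S N ^ 2 - O N)) N < 0) := by
  have h6pos : (0:ℝ) < Real.sqrt 6 := Real.sqrt_pos.mpr (by norm_num)
  set u : ℝ := lam / Real.sqrt 6 with hu
  have hsq6 : Real.sqrt 6 ^ 2 = 6 := Real.sq_sqrt (by norm_num)
  have hu0 : 0 < u := div_pos hl h6pos
  have hlam2 : lam ^ 2 = 6 * u ^ 2 := by
    rw [hu, div_pow, hsq6]; field_simp
  have hu1 : u ^ 2 < 1 := by nlinarith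
  have hs32 : Real.sqrt (3 / 2) * lam = 3 * u := by
    have h9 : Real.sqrt (3 / 2) * Real.sqrt 6 = 3 := by
      rw [← Real.sqrt_mul (by norm_num)]
      rw [show (3:ℝ) / 2 * 6 = 3 ^ 2 by norm_num]
      exact Real.sqrt_sq (by norm_num)
    rw [hu, (eq_div_iff h6pos.ne').mpr h9]
    ring
  have hS' : ∀ t, HasDerivAt S ((3:ℝ) * S t ^ 3 - 3 * S t + 3 * u ^ 2 * O t * S t
      + 3 * u - 3 * u * S t ^ 2 - 3 * u * O t) t := by
    intro t
    have e : (-(2 - (-1 + 3 * S t ^ 2 + 3 / 2 * gam * O t)) * S t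
        + Real.sqrt (3 / 2) * lam * (1 - S t ^ 2 - O t))
        = ((3:ℝ) * S t ^ 3 - 3 * S t + 3 * u ^ 2 * O t * S t
          + 3 * u - 3 * u * S t ^ 2 - 3 * u * O t) := by
      rw [hbif]
      linear_combination (O t * S t / 2) * hlam2 + (1 - S t ^ 2 - O t) * hs32
    exact e ▸ hS t
  have hO' : ∀ t, HasDerivAt O ((6:ℝ) * O t * (S t ^ 2 - u ^ 2 + u ^ 2 * O t)) t := by
    intro t
    have e : ((2 * (1 + (-1 + 3 * S t ^ 2 + 3 / 2 * gam * O t)) - 3 * gam) * O t)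
        = ((6:ℝ) * O t * (S t ^ 2 - u ^ 2 + u ^ 2 * O t)) := by
      rw [hbif]
      linear_combination (O t * (O t - 1)) * hlam2
    exact e ▸ hO t
  -- first derivative of M on the open region
  have hM' : ∀ t, 0 < 1 - S t ^ 2 - O t →
      HasDerivAt (fun t => (1 - u * S t) ^ 2 / (1 - S t ^ 2 - O t))
        (((-6:ℝ) * (S t - u) ^ 2 * (1 - u * S t)) / (1 - S t ^ 2 - O t)) t := by
    intro t ht
    have hnum := (((hS' t).const_mul u).const_sub 1).pow 2
    have hden := (((hS' t).pow 2).const_sub 1).sub (hO' t)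
    have h := hnum.div hden ht.ne'
    refine h.congr_deriv ?_
    simp only [Pi.pow_apply, Pi.sub_apply, Pi.add_apply, Pi.mul_apply]
    field_simp
    ring
  -- second derivative function
  have hM1' : ∀ t, 0 < 1 - S t ^ 2 - O t →
      HasDerivAt (fun t => ((-6:ℝ) * (S t - u) ^ 2 * (1 - u * S t)) / (1 - S t ^ 2 - O t))
        ((((-72:ℝ) * u ^ 2) * O t ^ 1 + ((36:ℝ) * u ^ 2 + (-18:ℝ) * u ^ 4) * O t ^ 2 + ((-72:ℝ) * u + (-126:ℝ) * u ^ 3) * S t ^ 1 + ((108:ℝ) * u + (162:ℝ) * u ^ 3 + (-18:ℝ) * u ^ 5) * S t ^ 1 * O t ^ 1 + ((-36:ℝ) * u + (-36:ℝ) * u ^ 3 + (18:ℝ) * u ^ 5) * S t ^ 1 * O t ^ 2 + ((36:ℝ) + (162:ℝ) * u ^ 2) * S t ^ 2 + ((-36:ℝ) + (-216:ℝ) * u ^ 2 + (-36:ℝ) * u ^ 4) * S t ^ 2 * O t ^ 1 + ((54:ℝ) * u ^ 2) * S t ^ 2 * O t ^ 2 + ((-18:ℝ) * u + (108:ℝ)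 * u ^ 3) * S t ^ 3 + ((54:ℝ) * u + (18:ℝ) * u ^ 5) * S t ^ 3 * O t ^ 1 + ((-18:ℝ) * u ^ 3) * S t ^ 3 * O t ^ 2 + ((-36:ℝ) + (-216:ℝ) * u ^ 2 + (-18:ℝ) * u ^ 4) * S t ^ 4 + ((72:ℝ) * u ^ 2) * S t ^ 4 * O t ^ 1 + ((108:ℝ) * u + (18:ℝ) * u ^ 3) * S t ^ 5 + ((-18:ℝ) * u + (-18:ℝ) * u ^ 3) * S t ^ 5 * O t ^ 1 + ((18:ℝ) * u ^ 2) * S t ^ 6 + ((-18:ℝ) * u) * S t ^ 7 + ((36:ℝ) * u ^ 2 + (18:ℝ) * u ^ 4)) / (1 - S t ^ 2 - O t) ^ 2) t := by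
    intro t ht
    have hnum := ((((hS' t).sub_const u).pow 2).const_mul (-6:ℝ)).mul
      (((hS' t).const_mul u).const_sub 1)
    have hden := (((hS' t).pow 2).const_sub 1).sub (hO' t)
    have h := hnum.div hden ht.ne'
    refine h.congr_deriv ?_
    simp only [Pi.pow_apply, Pi.sub_apply, Pi.add_apply, Pi.mul_apply]
    field_simp
    ring
  -- third derivative function
  have hM2' : ∀ t, 0 < 1 - S t ^ 2 - O t →
      HasDerivAt (fun t => (((-72:ℝ) * u ^ 2) * O t ^ 1 + ((36:ℝ) * u ^ 2 + (-18:ℝ) * u ^ 4) * O t ^ 2 + ((-72:ℝ) * u + (-126:ℝ) * u ^ 3) * S t ^ 1 + ((108:ℝ) * u + (162:ℝ) * u ^ 3 + (-18:ℝ) * u ^ 5) * S t ^ 1 * O t ^ 1 + ((-36:ℝ) * u + (-36:ℝ) * u ^ 3 + (18:ℝ) * u ^ 5) * S t ^ 1 * O t ^ 2 + ((36:ℝ) + (162:ℝ) * u ^ 2) * S t ^ 2 + ((-36:ℝ) + (-216:ℝ) * u ^ 2 + (-36:ℝ) * u ^ 4) * S t ^ 2 * O t ^ 1 + ((54:ℝ)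 * u ^ 2) * S t ^ 2 * O t ^ 2 + ((-18:ℝ) * u + (108:ℝ) * u ^ 3) * S t ^ 3 + ((54:ℝ) * u + (18:ℝ) * u ^ 5) * S t ^ 3 * O t ^ 1 + ((-18:ℝ) * u ^ 3) * S t ^ 3 * O t ^ 2 + ((-36:ℝ) + (-216:ℝ) * u ^ 2 + (-18:ℝ) * u ^ 4) * S t ^ 4 + ((72:ℝ) * u ^ 2) * S t ^ 4 * O t ^ 1 + ((108:ℝ) * u + (18:ℝ) * u ^ 3) * S t ^ 5 + ((-18:ℝ) * u + (-18:ℝ) * u ^ 3) * S t ^ 5 * O t ^ 1 + ((18:ℝ) * u ^ 2) * S t ^ 6 + ((-18:ℝ) * u) * S t ^ 7 + ((36:ℝ) * u ^ 2 + (18:ℝ) * u ^ 4)) / (1 - S t ^ 2 - O t) ^ 2)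
        ((((756:ℝ) * u ^ 2 + (1242:ℝ) * u ^ 4 + (-270:ℝ) * u ^ 6) * O t ^ 1 + ((-972:ℝ) * u ^ 2 + (-1458:ℝ) * u ^ 4 + (594:ℝ) * u ^ 6) * O t ^ 2 + ((540:ℝ) * u ^ 2 + (702:ℝ) * u ^ 4 + (-378:ℝ) * u ^ 6) * O t ^ 3 + ((-108:ℝ) * u ^ 2 + (-108:ℝ) * u ^ 4 + (54:ℝ) * u ^ 6) * O t ^ 4 + ((432:ℝ) * u + (1782:ℝ) * u ^ 3 + (216:ℝ) * u ^ 5) * S t ^ 1 + ((-1188:ℝ) * u + (-5400:ℝ) * u ^ 3 + (-216:ℝ) * u ^ 5 + (108:ℝ) * u ^ 7) * S t ^ 1 * O t ^ 1 + ((1080:ℝ) * u + (5886:ℝ) * u ^ 3 + (-108:ℝ) * u ^ 5 + (-270:ℝ) * u ^ 7) * S t ^ 1 * O t ^ 2 + ((-324:ℝ) * u + (-2700:ℝ) * u ^ 3 + (216:ℝ) * u ^ 7) * S t ^ 1 * O t ^ 3 + ((432:ℝ) * u ^ 3 + (108:ℝ) * u ^ 5 + (-54:ℝ) * u ^ 7)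 * S t ^ 1 * O t ^ 4 + ((-216:ℝ) + (-1998:ℝ) * u ^ 2) * S t ^ 2 + ((432:ℝ) + (5022:ℝ) * u ^ 2 + (540:ℝ) * u ^ 4 + (486:ℝ) * u ^ 6) * S t ^ 2 * O t ^ 1 + ((-216:ℝ) + (-4050:ℝ) * u ^ 2 + (-1566:ℝ) * u ^ 4 + (-540:ℝ) * u ^ 6) * S t ^ 2 * O t ^ 2 + ((1026:ℝ) * u ^ 2 + (1512:ℝ) * u ^ 4 + (54:ℝ) * u ^ 6) * S t ^ 2 * O t ^ 3 + ((-486:ℝ) * u ^ 4) * S t ^ 2 * O t ^ 4 + ((162:ℝ) * u + (-3240:ℝ) * u ^ 3 + (-432:ℝ) * u ^ 5) * S t ^ 3 + ((-432:ℝ) * u + (6480:ℝ) * u ^ 3 + (-216:ℝ) * u ^ 5 + (-216:ℝ) * u ^ 7) * S t ^ 3 * O t ^ 1 + ((162:ℝ) * u + (-3996:ℝ) * u ^ 3 + (810:ℝ) * u ^ 5 + (324:ℝ) * u ^ 7) * S t ^ 3 * O t ^ 2 + ((108:ℝ) * u + (756:ℝ) * u ^ 3 + (-324:ℝ) * u ^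 5 + (-108:ℝ) * u ^ 7) * S t ^ 3 * O t ^ 3 + ((162:ℝ) * u ^ 5) * S t ^ 3 * O t ^ 4 + ((432:ℝ) + (5400:ℝ) * u ^ 2 + (1188:ℝ) * u ^ 4) * S t ^ 4 + ((-432:ℝ) + (-9126:ℝ) * u ^ 2 + (-2808:ℝ) * u ^ 4 + (-162:ℝ) * u ^ 6) * S t ^ 4 * O t ^ 1 + ((4320:ℝ) * u ^ 2 + (2754:ℝ) * u ^ 4 + (-54:ℝ) * u ^ 6) * S t ^ 4 * O t ^ 2 + ((-594:ℝ) * u ^ 2 + (-1134:ℝ) * u ^ 4) * S t ^ 4 * O t ^ 3 + ((-2160:ℝ) * u + (1188:ℝ) * u ^ 3 + (216:ℝ) * u ^ 5) * S t ^ 5 + ((2592:ℝ) * u + (-756:ℝ) * u ^ 3 + (648:ℝ) * u ^ 5 + (108:ℝ) * u ^ 7) * S t ^ 5 * O t ^ 1 + ((-324:ℝ) * u + (-378:ℝ) * u ^ 3 + (-648:ℝ) * u ^ 5 + (-54:ℝ) * u ^ 7) * S t ^ 5 * O t ^ 2 + ((324:ℝ) * u ^ 3 + (324:ℝ) * u ^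 5) * S t ^ 5 * O t ^ 3 + ((-216:ℝ) + (-4212:ℝ) * u ^ 2 + (-864:ℝ) * u ^ 4) * S t ^ 6 + ((4482:ℝ) * u ^ 2 + (1188:ℝ) * u ^ 4 + (-54:ℝ) * u ^ 6) * S t ^ 6 * O t ^ 1 + ((-1458:ℝ) * u ^ 2 + (-810:ℝ) * u ^ 4) * S t ^ 6 * O t ^ 2 + ((2268:ℝ) * u + (216:ℝ) * u ^ 3) * S t ^ 7 + ((-1296:ℝ) * u + (-648:ℝ) * u ^ 3 + (-216:ℝ) * u ^ 5) * S t ^ 7 * O t ^ 1 + ((162:ℝ) * u + (648:ℝ) * u ^ 3 + (162:ℝ) * u ^ 5) * S t ^ 7 * O t ^ 2 + ((1296:ℝ) * u ^ 2 + (54:ℝ) * u ^ 4) * S t ^ 8 + ((-1134:ℝ) * u ^ 2 + (-162:ℝ) * u ^ 4) * S t ^ 8 * O t ^ 1 + ((-864:ℝ) * u + (54:ℝ) * u ^ 3) * S t ^ 9 + ((324:ℝ) * u + (324:ℝ) * u ^ 3) * S t ^ 9 * O t ^ 1 + ((-270:ℝ) * u ^ 2) * S t ^ 10 + ((162:ℝ)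 * u) * S t ^ 11 + ((-216:ℝ) * u ^ 2 + (-378:ℝ) * u ^ 4)) / (1 - S t ^ 2 - O t) ^ 3) t := by
    intro t ht
    have hnum := ((((((((((((((((((((hO' t).pow 1).const_mul ((-72:ℝ) * u ^ 2)).add (((hO' t).pow 2).const_mul ((36:ℝ) * u ^ 2 + (-18:ℝ) * u ^ 4))).add (((hS' t).pow 1).const_mul ((-72:ℝ) * u + (-126:ℝ) * u ^ 3))).add ((((hS' t).pow 1).const_mul ((108:ℝ) * u + (162:ℝ) * u ^ 3 + (-18:ℝ) * u ^ 5)).mul ((hO' t).pow 1))).add ((((hS' t).pow 1).const_mul ((-36:ℝ) * u + (-36:ℝ) * u ^ 3 + (18:ℝ) * u ^ 5)).mul ((hO' t).pow 2))).add (((hS' t).pow 2).const_mul ((36:ℝ) + (162:ℝ) * u ^ 2))).add ((((hS' t).pow 2).const_mul ((-36:ℝ) + (-216:ℝ) * u ^ 2 + (-36:ℝ) * u ^ 4)).mul ((hO' t).pow 1))).add ((((hS' t).pow 2).const_mul ((54:ℝ) * u ^ 2)).mul ((hO' t).pow 2))).add (((hS' t).pow 3).const_mul ((-18:ℝ) *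 u + (108:ℝ) * u ^ 3))).add ((((hS' t).pow 3).const_mul ((54:ℝ) * u + (18:ℝ) * u ^ 5)).mul ((hO' t).pow 1))).add ((((hS' t).pow 3).const_mul ((-18:ℝ) * u ^ 3)).mul ((hO' t).pow 2))).add (((hS' t).pow 4).const_mul ((-36:ℝ) + (-216:ℝ) * u ^ 2 + (-18:ℝ) * u ^ 4))).add ((((hS' t).pow 4).const_mul ((72:ℝ) * u ^ 2)).mul ((hO' t).pow 1))).add (((hS' t).pow 5).const_mul ((108:ℝ) * u + (18:ℝ) * u ^ 3))).add ((((hS' t).pow 5).const_mul ((-18:ℝ) * u + (-18:ℝ) * u ^ 3)).mul ((hO' t).pow 1))).add (((hS' t).pow 6).const_mul ((18:ℝ) * u ^ 2))).add (((hS' t).pow 7).const_mul ((-18:ℝ) * u))).add_const ((36:ℝ) * u ^ 2 + (18:ℝ) * u ^ 4))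
    have hden := ((((hS' t).pow 2).const_sub 1).sub (hO' t)).pow 2
    have h := hnum.div hden (pow_ne_zero 2 ht.ne')
    refine h.congr_deriv ?_
    simp only [Pi.pow_apply, Pi.sub_apply, Pi.add_apply, Pi.mul_apply]
    field_simp
    ring
  -- openness of the region
  have hScont : Continuous S := continuous_iff_continuousAt.mpr fun t => (hS' t).continuousAt
  have hOcont : Continuous O := continuous_iff_continuousAt.mpr fun t => (hO' t).continuousAt
  have hUopen : IsOpen {t : ℝ | 0 < 1 - S t ^ 2 - O t} :=
    isOpen_lt continuous_const ((continuous_const.sub (hScont.pow 2)).sub hOcont)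
  intro N hN1 hN2
  have hD : 0 < 1 - S N ^ 2 - O N := by linarith
  have hNU : N ∈ {t : ℝ | 0 < 1 - S t ^ 2 - O t} := hD
  have hus : 0 < 1 - u * S N := by nlinarith [sq_nonneg (S N - u)]
  have derivM : deriv (fun t => (1 - u * S t) ^ 2 / (1 - S t ^ 2 - O t)) N
      = ((-6:ℝ) * (S N - u) ^ 2 * (1 - u * S N)) / (1 - S N ^ 2 - O N) := (hM' N hD).deriv
  constructor
  · refine ⟨?_, ?_, ?_⟩
    · rw [derivM]
      field_simp
    · rw [derivM]
      apply div_nonpos_of_nonpos_of_nonneg _ hD.le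
      nlinarith [sq_nonneg (S N - u)]
    · rw [derivM]
      constructor
      · intro h
        have h0 : (-6:ℝ) * (S N - u) ^ 2 * (1 - u * S N) = 0 :=
          (div_eq_zero_iff.mp h).resolve_right hD.ne'
        have h1 : (S N - u) ^ 2 = 0 := by
          rcases mul_eq_zero.mp h0 with h2 | h2
          · rcases mul_eq_zero.mp h2 with h3 | h3
            · norm_num at h3
            · exact h3
          · exact absurd h2 (by linarith)
        have h4 : S N - u = 0 := by
          exact pow_eq_zero_iff two_ne_zero |>.mp h1
        linarith
      · intro h
        rw [h]
        simp
  · intro hsu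
    have hev1 : deriv (fun t => (1 - u * S t) ^ 2 / (1 - S t ^ 2 - O t)) =ᶠ[nhds N]
        (fun t => ((-6:ℝ) * (S t - u) ^ 2 * (1 - u * S t)) / (1 - S t ^ 2 - O t)) :=
      Filter.eventuallyEq_of_mem (hUopen.mem_nhds hNU) (fun x hx => (hM' x hx).deriv)
    have h2nd : deriv^[2] (fun t => (1 - u * S t) ^ 2 / (1 - S t ^ 2 - O t)) N
        = (((-72:ℝ) * u ^ 2) * O N ^ 1 + ((36:ℝ) * u ^ 2 + (-18:ℝ) * u ^ 4) * O N ^ 2 + ((-72:ℝ) * u + (-126:ℝ) * u ^ 3) * S N ^ 1 + ((108:ℝ) * u + (162:ℝ) * u ^ 3 + (-18:ℝ) * u ^ 5) * S N ^ 1 * O N ^ 1 + ((-36:ℝ) * u + (-36:ℝ) * u ^ 3 + (18:ℝ) * u ^ 5) * S N ^ 1 * O N ^ 2 + ((36:ℝ) + (162:ℝ) * u ^ 2) * S N ^ 2 + ((-36:ℝ) + (-216:ℝ) * u ^ 2 + (-36:ℝ) * u ^ 4) * S N ^ 2 * O N ^ 1 + ((54:ℝ) * u ^ 2) * S N ^ 2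 * O N ^ 2 + ((-18:ℝ) * u + (108:ℝ) * u ^ 3) * S N ^ 3 + ((54:ℝ) * u + (18:ℝ) * u ^ 5) * S N ^ 3 * O N ^ 1 + ((-18:ℝ) * u ^ 3) * S N ^ 3 * O N ^ 2 + ((-36:ℝ) + (-216:ℝ) * u ^ 2 + (-18:ℝ) * u ^ 4) * S N ^ 4 + ((72:ℝ) * u ^ 2) * S N ^ 4 * O N ^ 1 + ((108:ℝ) * u + (18:ℝ) * u ^ 3) * S N ^ 5 + ((-18:ℝ) * u + (-18:ℝ) * u ^ 3) * S N ^ 5 * O N ^ 1 + ((18:ℝ) * u ^ 2) * S N ^ 6 + ((-18:ℝ) * u) * S N ^ 7 + ((36:ℝ) * u ^ 2 + (18:ℝ) * u ^ 4)) / (1 - S N ^ 2 - O N) ^ 2 := by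
      have hit : deriv^[2] (fun t => (1 - u * S t) ^ 2 / (1 - S t ^ 2 - O t)) N
          = deriv (deriv (fun t => (1 - u * S t) ^ 2 / (1 - S t ^ 2 - O t))) N := by
        simp [Function.iterate_succ, Function.comp_apply]
      rw [hit, hev1.deriv_eq]
      exact (hM1' N hD).deriv
    have hd2on : ∀ x ∈ {t : ℝ | 0 < 1 - S t ^ 2 - O t},
        deriv (deriv (fun t => (1 - u * S t) ^ 2 / (1 - S t ^ 2 - O t))) x
        = (fun t => (((-72:ℝ) * u ^ 2) * O t ^ 1 + ((36:ℝ) * u ^ 2 + (-18:ℝ) * u ^ 4) * O t ^ 2 + ((-72:ℝ) * u + (-126:ℝ) * u ^ 3) * S t ^ 1 + ((108:ℝ) * u + (162:ℝ) * u ^ 3 + (-18:ℝ) * u ^ 5) * S t ^ 1 * O t ^ 1 + ((-36:ℝ) * u + (-36:ℝ) * u ^ 3 + (18:ℝ) * u ^ 5) * S t ^ 1 * O t ^ 2 + ((36:ℝ) + (162:ℝ) * u ^ 2) * S t ^ 2 + ((-36:ℝ) + (-216:ℝ) * u ^ 2 + (-36:ℝ) * u ^ 4) * S t ^ 2 * O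 t ^ 1 + ((54:ℝ) * u ^ 2) * S t ^ 2 * O t ^ 2 + ((-18:ℝ) * u + (108:ℝ) * u ^ 3) * S t ^ 3 + ((54:ℝ) * u + (18:ℝ) * u ^ 5) * S t ^ 3 * O t ^ 1 + ((-18:ℝ) * u ^ 3) * S t ^ 3 * O t ^ 2 + ((-36:ℝ) + (-216:ℝ) * u ^ 2 + (-18:ℝ) * u ^ 4) * S t ^ 4 + ((72:ℝ) * u ^ 2) * S t ^ 4 * O t ^ 1 + ((108:ℝ) * u + (18:ℝ) * u ^ 3) * S t ^ 5 + ((-18:ℝ) * u + (-18:ℝ) * u ^ 3) * S t ^ 5 * O t ^ 1 + ((18:ℝ) * u ^ 2) * S t ^ 6 + ((-18:ℝ) * u) * S t ^ 7 + ((36:ℝ) * u ^ 2 + (18:ℝ) * u ^ 4)) / (1 - S t ^ 2 - O t) ^ 2) x := by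
      intro x hx
      have hev1x : deriv (fun t => (1 - u * S t) ^ 2 / (1 - S t ^ 2 - O t)) =ᶠ[nhds x]
          (fun t => ((-6:ℝ) * (S t - u) ^ 2 * (1 - u * S t)) / (1 - S t ^ 2 - O t)) :=
        Filter.eventuallyEq_of_mem (hUopen.mem_nhds hx) (fun y hy => (hM' y hy).deriv)
      rw [hev1x.deriv_eq]
      exact (hM1' x hx).deriv
    have hev2 : deriv (deriv (fun t => (1 - u * S t) ^ 2 / (1 - S t ^ 2 - O t))) =ᶠ[nhds N]
        (fun t => (((-72:ℝ) * u ^ 2) * O t ^ 1 + ((36:ℝ) * u ^ 2 + (-18:ℝ) * u ^ 4) * O t ^ 2 + ((-72:ℝ) * u + (-126:ℝ) * u ^ 3) * S t ^ 1 + ((108:ℝ) * u + (162:ℝ) * u ^ 3 + (-18:ℝ) * u ^ 5) * S t ^ 1 * O t ^ 1 + ((-36:ℝ) * u + (-36:ℝ) * u ^ 3 + (18:ℝ) * u ^ 5) * S t ^ 1 * O t ^ 2 + ((36:ℝ) + (162:ℝ) * u ^ 2) * S t ^ 2 + ((-36:ℝ) + (-216:ℝ) * u ^ 2 + (-36:ℝ)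 * u ^ 4) * S t ^ 2 * O t ^ 1 + ((54:ℝ) * u ^ 2) * S t ^ 2 * O t ^ 2 + ((-18:ℝ) * u + (108:ℝ) * u ^ 3) * S t ^ 3 + ((54:ℝ) * u + (18:ℝ) * u ^ 5) * S t ^ 3 * O t ^ 1 + ((-18:ℝ) * u ^ 3) * S t ^ 3 * O t ^ 2 + ((-36:ℝ) + (-216:ℝ) * u ^ 2 + (-18:ℝ) * u ^ 4) * S t ^ 4 + ((72:ℝ) * u ^ 2) * S t ^ 4 * O t ^ 1 + ((108:ℝ) * u + (18:ℝ) * u ^ 3) * S t ^ 5 + ((-18:ℝ) * u + (-18:ℝ) * u ^ 3) * S t ^ 5 * O t ^ 1 + ((18:ℝ) * u ^ 2) * S t ^ 6 + ((-18:ℝ) * u) * S t ^ 7 + ((36:ℝ) * u ^ 2 + (18:ℝ) * u ^ 4)) / (1 - S t ^ 2 - O t) ^ 2) :=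
      Filter.eventuallyEq_of_mem (hUopen.mem_nhds hNU) hd2on
    have h3rd : deriv^[3] (fun t => (1 - u * S t) ^ 2 / (1 - S t ^ 2 - O t)) N
        = (((756:ℝ) * u ^ 2 + (1242:ℝ) * u ^ 4 + (-270:ℝ) * u ^ 6) * O N ^ 1 + ((-972:ℝ) * u ^ 2 + (-1458:ℝ) * u ^ 4 + (594:ℝ) * u ^ 6) * O N ^ 2 + ((540:ℝ) * u ^ 2 + (702:ℝ) * u ^ 4 + (-378:ℝ) * u ^ 6) * O N ^ 3 + ((-108:ℝ) * u ^ 2 + (-108:ℝ) * u ^ 4 + (54:ℝ) * u ^ 6) * O N ^ 4 + ((432:ℝ) * u + (1782:ℝ) * u ^ 3 + (216:ℝ) * u ^ 5) * S N ^ 1 + ((-1188:ℝ) * u + (-5400:ℝ) * u ^ 3 + (-216:ℝ) * u ^ 5 + (108:ℝ) * u ^ 7) * S N ^ 1 * O N ^ 1 + ((1080:ℝ) * u + (5886:ℝ) * u ^ 3 + (-108:ℝ) * u ^ 5 + (-270:ℝ) * u ^ 7) * S N ^ 1 * O N ^ 2 + ((-324:ℝ) * u + (-2700:ℝ) * u ^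 3 + (216:ℝ) * u ^ 7) * S N ^ 1 * O N ^ 3 + ((432:ℝ) * u ^ 3 + (108:ℝ) * u ^ 5 + (-54:ℝ) * u ^ 7) * S N ^ 1 * O N ^ 4 + ((-216:ℝ) + (-1998:ℝ) * u ^ 2) * S N ^ 2 + ((432:ℝ) + (5022:ℝ) * u ^ 2 + (540:ℝ) * u ^ 4 + (486:ℝ) * u ^ 6) * S N ^ 2 * O N ^ 1 + ((-216:ℝ) + (-4050:ℝ) * u ^ 2 + (-1566:ℝ) * u ^ 4 + (-540:ℝ) * u ^ 6) * S N ^ 2 * O N ^ 2 + ((1026:ℝ) * u ^ 2 + (1512:ℝ) * u ^ 4 + (54:ℝ) * u ^ 6) * S N ^ 2 * O N ^ 3 + ((-486:ℝ) * u ^ 4) * S N ^ 2 * O N ^ 4 + ((162:ℝ) * u + (-3240:ℝ) * u ^ 3 + (-432:ℝ) * u ^ 5) * S N ^ 3 + ((-432:ℝ) * u + (6480:ℝ) * u ^ 3 + (-216:ℝ) * u ^ 5 + (-216:ℝ) * u ^ 7) * S N ^ 3 * O N ^ 1 + ((162:ℝ) * u + (-3996:ℝ) * u ^ 3 + (810:ℝ)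 * u ^ 5 + (324:ℝ) * u ^ 7) * S N ^ 3 * O N ^ 2 + ((108:ℝ) * u + (756:ℝ) * u ^ 3 + (-324:ℝ) * u ^ 5 + (-108:ℝ) * u ^ 7) * S N ^ 3 * O N ^ 3 + ((162:ℝ) * u ^ 5) * S N ^ 3 * O N ^ 4 + ((432:ℝ) + (5400:ℝ) * u ^ 2 + (1188:ℝ) * u ^ 4) * S N ^ 4 + ((-432:ℝ) + (-9126:ℝ) * u ^ 2 + (-2808:ℝ) * u ^ 4 + (-162:ℝ) * u ^ 6) * S N ^ 4 * O N ^ 1 + ((4320:ℝ) * u ^ 2 + (2754:ℝ) * u ^ 4 + (-54:ℝ) * u ^ 6) * S N ^ 4 * O N ^ 2 + ((-594:ℝ) * u ^ 2 + (-1134:ℝ) * u ^ 4) * S N ^ 4 * O N ^ 3 + ((-2160:ℝ) * u + (1188:ℝ) * u ^ 3 + (216:ℝ) * u ^ 5) * S N ^ 5 + ((2592:ℝ) * u + (-756:ℝ) * u ^ 3 + (648:ℝ) * u ^ 5 + (108:ℝ) * u ^ 7) * S N ^ 5 * O N ^ 1 + ((-324:ℝ) * u + (-378:ℝ) * u ^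 3 + (-648:ℝ) * u ^ 5 + (-54:ℝ) * u ^ 7) * S N ^ 5 * O N ^ 2 + ((324:ℝ) * u ^ 3 + (324:ℝ) * u ^ 5) * S N ^ 5 * O N ^ 3 + ((-216:ℝ) + (-4212:ℝ) * u ^ 2 + (-864:ℝ) * u ^ 4) * S N ^ 6 + ((4482:ℝ) * u ^ 2 + (1188:ℝ) * u ^ 4 + (-54:ℝ) * u ^ 6) * S N ^ 6 * O N ^ 1 + ((-1458:ℝ) * u ^ 2 + (-810:ℝ) * u ^ 4) * S N ^ 6 * O N ^ 2 + ((2268:ℝ) * u + (216:ℝ) * u ^ 3) * S N ^ 7 + ((-1296:ℝ) * u + (-648:ℝ) * u ^ 3 + (-216:ℝ) * u ^ 5) * S N ^ 7 * O N ^ 1 + ((162:ℝ) * u + (648:ℝ) * u ^ 3 + (162:ℝ) * u ^ 5) * S N ^ 7 * O N ^ 2 + ((1296:ℝ) * u ^ 2 + (54:ℝ) * u ^ 4) * S N ^ 8 + ((-1134:ℝ) * u ^ 2 + (-162:ℝ) * u ^ 4) * S N ^ 8 * O N ^ 1 + ((-864:ℝ) * u + (54:ℝ) * u ^ 3) * S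 N ^ 9 + ((324:ℝ) * u + (324:ℝ) * u ^ 3) * S N ^ 9 * O N ^ 1 + ((-270:ℝ) * u ^ 2) * S N ^ 10 + ((162:ℝ) * u) * S N ^ 11 + ((-216:ℝ) * u ^ 2 + (-378:ℝ) * u ^ 4)) / (1 - S N ^ 2 - O N) ^ 3 := by
      have hit : deriv^[3] (fun t => (1 - u * S t) ^ 2 / (1 - S t ^ 2 - O t)) N
          = deriv (deriv (deriv (fun t => (1 - u * S t) ^ 2 / (1 - S t ^ 2 - O t)))) N := by
        simp [Function.iterate_succ, Function.comp_apply]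
      rw [hit, hev2.deriv_eq]
      exact (hM2' N hD).deriv
    have h1u : 0 < 1 - u ^ 2 := by linarith
    have hDu : 0 < 1 - u ^ 2 - O N := by
      rw [hsu] at hD; linarith
    refine ⟨?_, ?_, ?_⟩
    · rw [h2nd, hsu, div_eq_zero_iff]
      left
      ring
    · rw [h3rd, hsu]
      rw [div_eq_div_iff (by positivity) (by linarith : (0:ℝ) < 1 - u ^ 2 - O N).ne']
      ring
    · rw [h3rd, hsu]
      apply div_neg_of_neg_of_pos
      · nlinarith [mul_pos (mul_pos (mul_pos (pow_pos hN2 2) (pow_pos hu0 2)) (pow_pos h1u 3))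
          (pow_pos hDu 2)]
      · positivity
end

section
/- Let M(Σ,Ω) = (1 - vΣ)² Ω_V^{a-1} Ω^{-a} with v = √(3/2)γ/λ and a = 2(λ²-3γ)/(2λ²-3γ²), where γ ∈ (0,2), λ² > 3γ. Then along interior solutions (Ω_V > 0, Ω > 0) of the system, M' = -[3(2-γ)(Σ-v)²/((1-v²)(1-vΣ))]·M ≤ 0, with equality only when Σ = v. -/
set_option maxHeartbeats 2000000
/-- Along interior solutions, `M = (1-vΣ)² Ω_V^{a-1} Ω^{-a}` with `v = √(3/2)γ/λ`,
`a = 2(λ²-3γ)/(2λ²-3γ²)` satisfies `M' = -[3(2-γ)(Σ-v)²/((1-v²)(1-vΣ))]·M ≤ 0`, with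
equality only when `Σ = v`. -/
theorem stmt_10 (lam gam v a : ℝ) (hl : 0 < lam) (hg : 0 < gam) (hg2 : gam < 2)
    (hlg : 3 * gam < lam ^ 2)
    (hv : v = Real.sqrt (3 / 2) * (gam / lam))
    (ha : a = 2 * (lam ^ 2 - 3 * gam) / (2 * lam ^ 2 - 3 * gam ^ 2))
    (S O : ℝ → ℝ)
    (hS : ∀ N, HasDerivAt S (-(2 - (-1 + 3 * S N ^ 2 + 3 / 2 * gam * O N)) * S N
        + Real.sqrt (3 / 2) * lam * (1 - S N ^ 2 - O N)) N)
    (hO : ∀ N, HasDerivAt O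
        ((2 * (1 + (-1 + 3 * S N ^ 2 + 3 / 2 * gam * O N)) - 3 * gam) * O N) N)
    (N : ℝ) (hint : S N ^ 2 + O N < 1) (hOp : 0 < O N) :
    HasDerivAt (fun N => (1 - v * S N) ^ 2 * (1 - S N ^ 2 - O N) ^ (a - 1) * O N ^ (-a))
      (-(3 * (2 - gam) * (S N - v) ^ 2 / ((1 - v ^ 2) * (1 - v * S N)))
        * ((1 - v * S N) ^ 2 * (1 - S N ^ 2 - O N) ^ (a - 1) * O N ^ (-a))) N ∧
    -(3 * (2 - gam) * (S N - v) ^ 2 / ((1 - v ^ 2) * (1 - v * S N)))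
        * ((1 - v * S N) ^ 2 * (1 - S N ^ 2 - O N) ^ (a - 1) * O N ^ (-a)) ≤ 0 ∧
    (-(3 * (2 - gam) * (S N - v) ^ 2 / ((1 - v ^ 2) * (1 - v * S N)))
        * ((1 - v * S N) ^ 2 * (1 - S N ^ 2 - O N) ^ (a - 1) * O N ^ (-a)) = 0
      ↔ S N = v) := by
  set t := Real.sqrt (3/2) with htdef
  have hsq : t ^ 2 = 3/2 := Real.sq_sqrt (by norm_num)
  have hsqpos : 0 < t := Real.sqrt_pos.2 (by norm_num)
  have hv0 : 0 < v := by
    rw [hv]; positivity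
  have hvl : v * lam = t * gam := by rw [hv]; field_simp
  have hv2 : v ^ 2 * lam ^ 2 = 3 / 2 * gam ^ 2 := by
    calc v ^ 2 * lam ^ 2 = (v * lam) ^ 2 := by ring
    _ = (t * gam) ^ 2 := by rw [hvl]
    _ = 3 / 2 * gam ^ 2 := by rw [mul_pow, hsq]
  have hv1sq : v ^ 2 < 1 := by nlinarith [sq_nonneg gam, sq_nonneg lam]
  have hv1 : v < 1 := by nlinarith
  have hden : (0:ℝ) < 2 * lam ^ 2 - 3 * gam ^ 2 := by nlinarith
  have haD : a * (2 * lam ^ 2 - 3 * gam ^ 2) = 2 * lam ^ 2 - 6 * gam := by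
    rw [ha]; field_simp; ring
  have haval : a = (gam - 2 * v ^ 2) / (gam * (1 - v ^ 2)) := by
    rw [eq_div_iff (ne_of_gt (by nlinarith : (0:ℝ) < gam * (1 - v ^ 2)))]
    have h2 : a * (gam * (1 - v ^ 2)) * lam ^ 2 = (gam - 2 * v ^ 2) * lam ^ 2 := by
      linear_combination (gam / 2) * haD + (2 - a * gam) * hv2
    have hl2 : (0:ℝ) < lam ^ 2 := by positivity
    exact mul_right_cancel₀ (ne_of_gt hl2) h2
  have hsl : t * lam = 3 / 2 * gam / v := by
    rw [eq_div_iff (ne_of_gt hv0)]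
    calc t * lam * v = t * (v * lam) := by ring
    _ = t * (t * gam) := by rw [hvl]
    _ = t ^ 2 * gam := by ring
    _ = 3 / 2 * gam := by rw [hsq]
  set s := S N with hs
  set o := O N with ho
  have hov : 0 < 1 - s ^ 2 - o := by linarith
  have hs2 : s ^ 2 < 1 := by nlinarith
  have hvs : v * s < 1 := by nlinarith [sq_nonneg (v - s)]
  have h1vs : (0:ℝ) < 1 - v * s := by linarith
  have h1v2 : (0:ℝ) < 1 - v ^ 2 := by linarith
  -- derivative construction
  have dS := hS N
  have dO := hO N
  set DS : ℝ := -(2 - (-1 + 3 * s ^ 2 + 3 / 2 * gam * o)) * s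
      + t * lam * (1 - s ^ 2 - o) with hDS
  set DO : ℝ := (2 * (1 + (-1 + 3 * s ^ 2 + 3 / 2 * gam * o)) - 3 * gam) * o with hDO
  have d1 : HasDerivAt (fun N => 1 - v * S N) (-(v * DS)) N := by
    simpa using (dS.const_mul v).const_sub 1
  have d1sq : HasDerivAt (fun N => (1 - v * S N) ^ 2)
      ((2:ℕ) * (1 - v * s) ^ 1 * -(v * DS)) N := d1.pow 2
  have dov : HasDerivAt (fun N => 1 - S N ^ 2 - O N)
      (-(((2:ℕ)) * s ^ 1 * DS) - DO) N := by
    exact (((dS.pow 2).const_sub 1).sub dO).congr_deriv (by simp [hs])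
  have d2 : HasDerivAt (fun N => (1 - S N ^ 2 - O N) ^ (a - 1))
      ((-(((2:ℕ)) * s ^ 1 * DS) - DO) * (a - 1) * (1 - s ^ 2 - o) ^ (a - 1 - 1)) N :=
    dov.rpow_const (Or.inl (ne_of_gt hov))
  have d3 : HasDerivAt (fun N => O N ^ (-a)) (DO * (-a) * o ^ (-a - 1)) N :=
    dO.rpow_const (Or.inl (ne_of_gt hOp))
  have dM := (d1sq.mul d2).mul d3
  -- key algebraic identity
  have e1 : (1 - s ^ 2 - o) ^ (a - 1) = (1 - s ^ 2 - o) ^ (a - 2) * (1 - s ^ 2 - o) := by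
    rw [show a - 1 = (a - 2) + 1 by ring, Real.rpow_add hov, Real.rpow_one]
  have e2 : a - 1 - 1 = a - 2 := by ring
  have e3 : o ^ (-a) = o ^ (-a - 1) * o := by
    rw [← Real.rpow_add_one (ne_of_gt hOp) (-a - 1)]
    congr 1; ring
  set A := (1 - s ^ 2 - o) ^ (a - 2) with hA
  set B := o ^ (-a - 1) with hB
  have hApos : 0 < A := Real.rpow_pos_of_pos hov _
  have hBpos : 0 < B := Real.rpow_pos_of_pos hOp _
  have hvsne : (1 : ℝ) - v * s ≠ 0 := ne_of_gt h1vs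
  have hv1ne : (1 : ℝ) - v ^ 2 ≠ 0 := ne_of_gt h1v2
  have key : ((2:ℕ) * (1 - v * s) ^ 1 * -(v * DS) * ((1 - s ^ 2 - o) ^ (a - 1))
        + (1 - v * s) ^ 2 * ((-(((2:ℕ)) * s ^ 1 * DS) - DO) * (a - 1)
            * (1 - s ^ 2 - o) ^ (a - 1 - 1))) * o ^ (-a)
      + (1 - v * s) ^ 2 * (1 - s ^ 2 - o) ^ (a - 1) * (DO * (-a) * o ^ (-a - 1))
      = -(3 * (2 - gam) * (s - v) ^ 2 / ((1 - v ^ 2) * (1 - v * s)))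
        * ((1 - v * s) ^ 2 * (1 - s ^ 2 - o) ^ (a - 1) * o ^ (-a)) := by
    rw [e2, e1, e3, ← hA, ← hB, hDS, hDO, hsl, haval]
    have hgne : gam ≠ 0 := ne_of_gt hg
    have hvne : v ≠ 0 := ne_of_gt hv0
    field_simp
    ring
  have hMpos : 0 < (1 - v * s) ^ 2 * (1 - s ^ 2 - o) ^ (a - 1) * o ^ (-a) :=
    mul_pos (mul_pos (pow_pos h1vs 2) (Real.rpow_pos_of_pos hov _))
      (Real.rpow_pos_of_pos hOp _)
  have hCnn : 0 ≤ 3 * (2 - gam) * (s - v) ^ 2 / ((1 - v ^ 2) * (1 - v * s)) := by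
    apply div_nonneg
    · exact mul_nonneg (by linarith) (sq_nonneg _)
    · exact le_of_lt (mul_pos h1v2 h1vs)
  refine ⟨dM.congr_deriv key, ?_, ?_⟩
  · exact mul_nonpos_of_nonpos_of_nonneg (neg_nonpos.2 hCnn) hMpos.le
  · constructor
    · intro h
      have h0 : 3 * (2 - gam) * (s - v) ^ 2 / ((1 - v ^ 2) * (1 - v * s)) = 0 := by
        rcases mul_eq_zero.1 h with h' | h'
        · linarith [neg_eq_zero.1 h']
        · exact absurd h' (ne_of_gt hMpos)
      have hdne : (1 - v ^ 2) * (1 - v * s) ≠ 0 := ne_of_gt (mul_pos h1v2 h1vs)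
      have := (div_eq_zero_iff.1 h0).resolve_right hdne
      have hsv : (s - v) ^ 2 = 0 := by
        rcases mul_eq_zero.1 this with h' | h'
        · exfalso; linarith
        · exact h'
      have := pow_eq_zero_iff (n := 2) (by norm_num) |>.1 hsv
      linarith [sub_eq_zero.1 this]
    · intro h
      rw [h]
      simp
end

section
/- With M as in the scaling-case monotone function and Σ = v = √(3/2)γ/λ, the third derivative of M along the flow satisfies M'''|_{Σ=v} = -27(2-γ)[2v² - γ(1-Ω)]²·M|_{Σ=v}/(2v²) ≤ 0, with equality if and only if Ω = 1 - 3γ/λ² (the fixed point value). -/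
set_option maxHeartbeats 1000000
set_option maxRecDepth 4000

open Filter

/-- At points with `Σ = v` on interior solutions, the third derivative of the scaling-case
monotone function `M = (1-vΣ)² Ω_V^{a-1} Ω^{-a}` along the flow satisfies
`M''' = -27(2-γ)[2v² - γ(1-Ω)]² M /(2v²) ≤ 0`, with equality iff `Ω = 1 - 3γ/λ²`. -/
theorem stmt_11 (lam gam v a : ℝ) (hl : 0 < lam) (hg : 0 < gam) (hg2 : gam < 2)
    (hlg : 3 * gam < lam ^ 2)
    (hv : v = Real.sqrt (3 / 2) * (gam / lam))
    (ha : a = 2 * (lam ^ 2 - 3 * gam) / (2 * lam ^ 2 - 3 * gam ^ 2))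
    (S O : ℝ → ℝ)
    (hS : ∀ N, HasDerivAt S (-(2 - (-1 + 3 * S N ^ 2 + 3 / 2 * gam * O N)) * S N
        + Real.sqrt (3 / 2) * lam * (1 - S N ^ 2 - O N)) N)
    (hO : ∀ N, HasDerivAt O
        ((2 * (1 + (-1 + 3 * S N ^ 2 + 3 / 2 * gam * O N)) - 3 * gam) * O N) N)
    (N : ℝ) (hint : S N ^ 2 + O N < 1) (hOp : 0 < O N) (hSv : S N = v) :
    deriv^[3] (fun N => (1 - v * S N) ^ 2 * (1 - S N ^ 2 - O N) ^ (a - 1) * O N ^ (-a)) N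
        = -(27 * (2 - gam) * (2 * v ^ 2 - gam * (1 - O N)) ^ 2
            * ((1 - v * S N) ^ 2 * (1 - S N ^ 2 - O N) ^ (a - 1) * O N ^ (-a)))
          / (2 * v ^ 2) ∧
      deriv^[3] (fun N => (1 - v * S N) ^ 2 * (1 - S N ^ 2 - O N) ^ (a - 1) * O N ^ (-a)) N
        ≤ 0 ∧
      (deriv^[3] (fun N => (1 - v * S N) ^ 2 * (1 - S N ^ 2 - O N) ^ (a - 1) * O N ^ (-a)) N
          = 0 ↔ O N = 1 - 3 * gam / lam ^ 2) := by
  have hl0 : lam ≠ 0 := ne_of_gt hl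
  have hg0 : gam ≠ 0 := ne_of_gt hg
  set c := Real.sqrt (3/2) with hcdef
  have hc2 : c^2 = 3/2 := Real.sq_sqrt (by norm_num)
  have hcpos : 0 < c := Real.sqrt_pos.mpr (by norm_num)
  have hcv : c = v * lam / gam := by
    rw [hv]; field_simp
  have hrel : 2*v^2*lam^2 = 3*gam^2 := by
    have h1 : v * lam = c * gam := by rw [hv]; field_simp
    have h2 : (v*lam)^2 = c^2 * gam^2 := by rw [h1]; ring
    rw [hc2] at h2; nlinarith [h2]
  have hv0 : 0 < v := by rw [hv]; positivity
  have hgl2 : 3*gam^2 < 2*lam^2 := by nlinarith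
  have hv1 : v^2 < 1 := by nlinarith [sq_nonneg lam, mul_pos hl hl]
  have h1v : (0:ℝ) < 1 - v^2 := by linarith
  have haD : (2*lam^2 - 3*gam^2) ≠ 0 := by nlinarith
  -- abbreviations
  set sE : ℝ → ℝ := fun x => -(2 - (-1 + 3 * S x ^ 2 + 3 / 2 * gam * O x)) * S x
      + c * lam * (1 - S x ^ 2 - O x) with hsE
  set oE : ℝ → ℝ := fun x => (2 * (1 + (-1 + 3 * S x ^ 2 + 3 / 2 * gam * O x)) - 3 * gam) * O x
      with hoE
  set Mf : ℝ → ℝ := fun x => (1 - v * S x) ^ 2 * (1 - S x ^ 2 - O x) ^ (a - 1) * O x ^ (-a)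
      with hMf
  set K : ℝ := 3*(2-gam)/(1-v^2) with hK
  set F : ℝ → ℝ := fun x => -K * (S x - v)^2 / (1 - v * S x) with hF
  set G : ℝ → ℝ := fun x => ((-K * (2*(S x - v)^1 * sE x)) * (1 - v*S x)
      - (-K * (S x - v)^2) * (-(v * sE x))) / (1 - v*S x)^2 with hG
  -- eventual positivity
  have hwN : 0 < 1 - S N ^ 2 - O N := by linarith
  have hpN : 0 < 1 - v * S N := by rw [hSv]; nlinarith
  have hEv : ∀ᶠ x in nhds N, 0 < O x ∧ 0 < 1 - S x ^ 2 - O x ∧ 0 < 1 - v * S x := by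
    have cS : ContinuousAt S N := (hS N).continuousAt
    have cO : ContinuousAt O N := (hO N).continuousAt
    have e1 : ∀ᶠ x in nhds N, 0 < O x := cO.eventually (eventually_gt_nhds hOp)
    have cW : ContinuousAt (fun x => 1 - S x ^ 2 - O x) N := by fun_prop
    have e2 : ∀ᶠ x in nhds N, 0 < 1 - S x ^ 2 - O x := cW.eventually (eventually_gt_nhds hwN)
    have cP : ContinuousAt (fun x => 1 - v * S x) N := by fun_prop
    have e3 : ∀ᶠ x in nhds N, 0 < 1 - v * S x := cP.eventually (eventually_gt_nhds hpN)
    filter_upwards [e1, e2, e3] with x h1 h2 h3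
    exact ⟨h1, h2, h3⟩
  -- derivative of M along the flow
  have hMd : ∀ x, 0 < O x → 0 < 1 - S x ^ 2 - O x → 0 < 1 - v * S x →
      HasDerivAt Mf (F x * Mf x) x := by
    intro x hox hwx hpx
    have hs : HasDerivAt S (sE x) x := hS x
    have ho : HasDerivAt O (oE x) x := hO x
    have d1 : HasDerivAt (fun y => (1 - v * S y) ^ 2)
        ((2:ℕ) * (1 - v * S x) ^ (2-1) * (-(v * sE x))) x :=
      ((hs.const_mul v).const_sub 1).fun_pow 2
    have hw : HasDerivAt (fun y => 1 - S y ^ 2 - O y)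
        (-((2:ℕ) * S x ^ (2-1) * sE x) - oE x) x :=
      ((hs.fun_pow 2).const_sub 1).fun_sub ho
    have d2 : HasDerivAt (fun y => (1 - S y ^ 2 - O y) ^ (a-1))
        ((-((2:ℕ) * S x ^ (2-1) * sE x) - oE x) * (a-1) * (1 - S x ^ 2 - O x) ^ (a-1-1)) x :=
      hw.rpow_const (Or.inl (ne_of_gt hwx))
    have d3 : HasDerivAt (fun y => O y ^ (-a)) (oE x * (-a) * O x ^ (-a-1)) x :=
      ho.rpow_const (Or.inl (ne_of_gt hox))
    have dM := (d1.fun_mul d2).fun_mul d3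
    refine dM.congr_deriv ?_
    symm
    set s := S x with hsx
    set o := O x with hox2
    rw [show a - 1 - 1 = (a-1) - 1 from rfl, Real.rpow_sub hwx (a-1) 1, Real.rpow_one,
        show -a - 1 = (-a) - 1 from rfl, Real.rpow_sub hox (-a) 1, Real.rpow_one]
    set W := (1 - S x ^ 2 - O x) ^ (a-1) with hW
    set Pp := O x ^ (-a) with hPp
    simp only [hF, hMf, hsE, hoE, hK, ← hW, ← hPp]
    rw [hcv, ha]
    push_cast
    have hw0 : (1 - S x ^ 2 - O x) ≠ 0 := ne_of_gt hwx
    have ho0 : O x ≠ 0 := ne_of_gt hox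
    have hp0 : (1 - v * S x) ≠ 0 := ne_of_gt hpx
    have h1v0 : (1 - v^2) ≠ 0 := ne_of_gt h1v
    field_simp
    linear_combination ((-6)*gam*o*W*Pp + (6)*gam*o^2*W*Pp + (6)*gam*s^2*o*W*Pp + (3)*gam^2*o^2*W*Pp + (-3)*gam^2*o^3*W*Pp + (3)*gam^2*s^2*o*W*Pp + (-6)*gam^2*s^2*o^2*W*Pp + (-3)*gam^2*s^4*o*W*Pp + (18)*v*gam*s*o*W*Pp + (-18)*v*gam*s*o^2*W*Pp + (-18)*v*gam*s^3*o*W*Pp + (-6)*v*gam^2*s*o*W*Pp + (3)*v*gam^2*s*o^2*W*Pp + (3)*v*gam^2*s*o^3*W*Pp + (3)*v*gam^2*s^3*o*W*Pp + (6)*v*gam^2*s^3*o^2*W*Pp + (3)*v*gam^2*s^5*o*W*Pp + (-18)*v^2*gam*s^2*o*W*Pp + (18)*v^2*gam*s^2*o^2*W*Pp + (18)*v^2*gam*s^4*o*W*Pp + (3)*v^2*gam^2*o*W*Pp + (-6)*v^2*gam^2*o^2*W*Pp + (3)*v^2*gam^2*o^3*W*Pp + (3)*v^2*gam^2*s^2*o*W*Pp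 + (-3)*v^2*gam^2*s^2*o^2*W*Pp + (-6)*v^2*gam^2*s^4*o*W*Pp + (6)*v^3*gam*s^3*o*W*Pp + (-6)*v^3*gam*s^3*o^2*W*Pp + (-6)*v^3*gam*s^5*o*W*Pp + (-3)*v^3*gam^2*s*o*W*Pp + (6)*v^3*gam^2*s*o^2*W*Pp + (-3)*v^3*gam^2*s*o^3*W*Pp + (3)*v^3*gam^2*s^3*o*W*Pp + (-3)*v^3*gam^2*s^3*o^2*W*Pp + (2)*lam^2*o*W*Pp + (-4)*lam^2*o^2*W*Pp + (2)*lam^2*o^3*W*Pp + (-4)*lam^2*s^2*o*W*Pp + (4)*lam^2*s^2*o^2*W*Pp + (2)*lam^2*s^4*o*W*Pp + (-2)*lam^2*v*s*o*W*Pp + (4)*lam^2*v*s*o^2*W*Pp + (-2)*lam^2*v*s*o^3*W*Pp + (4)*lam^2*v*s^3*o*W*Pp + (-4)*lam^2*v*s^3*o^2*W*Pp + (-2)*lam^2*v*s^5*o*W*Pp + (-2)*lam^2*v^2*o*W*Pp + (4)*lam^2*v^2*o^2*W*Pp + (-2)*lam^2*v^2*o^3*W*Pp + (4)*lam^2*v^2*s^2*o*W*Pp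 + (-4)*lam^2*v^2*s^2*o^2*W*Pp + (-2)*lam^2*v^2*s^4*o*W*Pp + (2)*lam^2*v^3*s*o*W*Pp + (-4)*lam^2*v^3*s*o^2*W*Pp + (2)*lam^2*v^3*s*o^3*W*Pp + (-4)*lam^2*v^3*s^3*o*W*Pp + (4)*lam^2*v^3*s^3*o^2*W*Pp + (2)*lam^2*v^3*s^5*o*W*Pp) * hrel
  -- derivative of F
  have hFd : ∀ x, (0:ℝ) < 1 - v * S x → HasDerivAt F (G x) x := by
    intro x hpx
    have hs : HasDerivAt S (sE x) x := hS x
    have dnum : HasDerivAt (fun y => -K * (S y - v)^2) (-K * ((2:ℕ)*(S x - v)^(2-1) * sE x)) x :=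
      ((hs.sub_const v).fun_pow 2).const_mul (-K)
    have dden : HasDerivAt (fun y => 1 - v * S y) (-(v * sE x)) x :=
      (hs.const_mul v).const_sub 1
    have := dnum.fun_div dden (ne_of_gt hpx)
    refine this.congr_deriv ?_
    simp only [hG]; push_cast; ring
  have h1 : deriv Mf =ᶠ[nhds N] fun x => F x * Mf x := by
    filter_upwards [hEv] with x hx
    exact (hMd x hx.1 hx.2.1 hx.2.2).deriv
  have h2 : deriv (fun x => F x * Mf x) =ᶠ[nhds N]
      fun x => G x * Mf x + F x * (F x * Mf x) := by
    filter_upwards [hEv] with x hx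
    exact ((hFd x hx.2.2).mul (hMd x hx.1 hx.2.1 hx.2.2)).deriv
  set M2 : ℝ → ℝ := fun x => G x * Mf x + F x * (F x * Mf x) with hM2
  have hred : deriv^[3] Mf N = deriv M2 N := by
    have e2 : deriv (deriv Mf) =ᶠ[nhds N] M2 := h1.deriv.trans h2
    show deriv (deriv (deriv Mf)) N = deriv M2 N
    exact e2.deriv_eq
  have hs : HasDerivAt S (sE N) N := hS N
  have ho : HasDerivAt O (oE N) N := hO N
  have hp2 : ((1 - v * S N)^2) ≠ 0 := pow_ne_zero 2 (ne_of_gt hpN)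
  -- derivative of sE at N
  have dQ : HasDerivAt (fun y => -1 + 3 * S y ^ 2 + 3 / 2 * gam * O y)
      (3 * ((2:ℕ) * S N ^ (2-1) * sE N) + 3 / 2 * gam * oE N) N :=
    (((hs.fun_pow 2).const_mul 3).const_add (-1)).fun_add (ho.const_mul (3/2*gam))
  have dW : HasDerivAt (fun y => 1 - S y ^ 2 - O y)
      (-((2:ℕ) * S N ^ (2-1) * sE N) - oE N) N := ((hs.fun_pow 2).const_sub 1).fun_sub ho
  have dsE : HasDerivAt sE
      ((3 * ((2:ℕ) * S N ^ (2-1) * sE N) + 3 / 2 * gam * oE N) * S N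
        + (-(2 - (-1 + 3 * S N ^ 2 + 3 / 2 * gam * O N))) * sE N
        + c * lam * (-((2:ℕ) * S N ^ (2-1) * sE N) - oE N)) N := by
    have := (((dQ.const_sub 2).fun_neg.fun_mul hs)).fun_add (dW.const_mul (c*lam))
    refine this.congr_deriv ?_
    ring
  have dden : HasDerivAt (fun y => 1 - v * S y) (-(v * sE N)) N :=
    (hs.const_mul v).const_sub 1
  -- derivative of the numerator of G
  have t1 := (hs.sub_const v).fun_pow 1
  have t2 := t1.const_mul (2:ℝ)
  have t3 := t2.fun_mul dsE
  have t4 := t3.const_mul (-K)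
  have t5 := t4.fun_mul dden
  have t6 := (hs.sub_const v).fun_pow 2
  have t7 := t6.const_mul (-K)
  have t8 := (dsE.const_mul v).fun_neg
  have t9 := t7.fun_mul t8
  have tnum := t5.fun_sub t9
  have tden := dden.fun_pow 2
  have dG : HasDerivAt G _ N := tnum.fun_div tden hp2
  have dMf : HasDerivAt Mf (F N * Mf N) N := hMd N hOp hwN hpN
  have dF : HasDerivAt F (G N) N := hFd N hpN
  have dFM := dF.fun_mul dMf
  have dM2 : HasDerivAt M2 _ N := (dG.fun_mul dMf).fun_add (dF.fun_mul dFM)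
  have hderM2 := dM2.deriv
  have hFN : F N = 0 := by simp [hF, hSv]
  have hGN : G N = 0 := by simp [hG, hSv]
  -- value of sE at N
  have hsEN : sE N = -(3/(2*v)) * (1 - v^2) * (2*v^2 - gam*(1 - O N)) := by
    simp only [hsE]
    rw [hSv, hcv]
    have hv0' : v ≠ 0 := ne_of_gt hv0
    field_simp
    linear_combination (1 - v^2 - O N) * hrel
  -- main equality
  have hX2v : (2*v^2:ℝ) ≠ 0 := by positivity
  have hmain : deriv^[3] Mf N
      = -(27*(2-gam)*(2*v^2 - gam*(1 - O N))^2 * Mf N)/(2*v^2) := by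
    rw [hred, hderM2, hFN, hGN, hsEN, hSv, hcv]
    simp only [hK, hMf, hSv]
    push_cast
    have hv0' : v ≠ 0 := ne_of_gt hv0
    have h1v0 : (1 - v^2) ≠ 0 := ne_of_gt h1v
    have hw0 : (1 - v^2 - O N) ≠ 0 := by rw [hSv] at hwN; exact ne_of_gt hwN
    have ho0 : O N ≠ 0 := ne_of_gt hOp
    set W := (1 - v^2 - O N) ^ (a-1) with hW
    set Pp := O N ^ (-a) with hPp
    have h1vv : (1 - v*v) ≠ 0 := by rw [show (1 - v*v) = 1 - v^2 by ring]; exact h1v0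
    have hden : ((1 - v^2) * (2*v*(2*v)) * ((1 - v*v)^2)^2) ≠ 0 :=
      mul_ne_zero (mul_ne_zero h1v0 (by positivity)) (pow_ne_zero 2 (pow_ne_zero 2 h1vv))
    field_simp
    ring
  have hMfpos : 0 < Mf N := by
    simp only [hMf]
    exact mul_pos (mul_pos (pow_pos hpN 2) (Real.rpow_pos_of_pos hwN _))
      (Real.rpow_pos_of_pos hOp _)
  have hv2pos : (0:ℝ) < 2*v^2 := by positivity
  have hnum : 0 ≤ 27*(2-gam)*(2*v^2 - gam*(1 - O N))^2 * Mf N :=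
    mul_nonneg (mul_nonneg (by nlinarith) (sq_nonneg _)) (le_of_lt hMfpos)
  refine ⟨?_, ?_, ?_⟩
  · rw [hmain]
  · rw [hmain]
    exact div_nonpos_of_nonpos_of_nonneg (neg_nonpos_of_nonneg hnum) (le_of_lt hv2pos)
  · rw [hmain]
    constructor
    · intro h
      have h0 : 27*(2-gam)*(2*v^2 - gam*(1 - O N))^2 * Mf N = 0 := by
        have := (div_eq_zero_iff.mp h).resolve_right (ne_of_gt hv2pos)
        linarith [neg_eq_zero.mp this]
      have hXz : (2*v^2 - gam*(1 - O N))^2 = 0 := by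
        rcases mul_eq_zero.mp h0 with h1 | h1
        · rcases mul_eq_zero.mp h1 with h2 | h2
          · exact absurd h2 (by intro hc; linarith)
          · exact h2
        · exact absurd h1 (ne_of_gt hMfpos)
      have hXz' : 2*v^2 - gam*(1 - O N) = 0 := sq_eq_zero_iff.mp hXz
      have hl2 : (lam:ℝ)^2 ≠ 0 := pow_ne_zero 2 hl0
      have h4 : gam * (3*gam) = gam * ((1 - O N)*lam^2) := by
        linear_combination lam^2 * hXz' - hrel
      have h3 : 3*gam/lam^2 = 1 - O N := by
        rw [div_eq_iff hl2]
        exact mul_left_cancel₀ hg0 h4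
      linarith [h3]
    · intro h
      have hXz : 2*v^2 - gam*(1 - O N) = 0 := by
        rw [h]
        have hl2 : (lam:ℝ)^2 ≠ 0 := pow_ne_zero 2 hl0
        field_simp
        linear_combination hrel
      rw [hXz]
      simp
end

section
/- Let f⃗ = (f_Σ, f_Ω) be the vector field of the system and let B(Σ,Ω) = Ω_V^{-1} Ω^{-3/2}. Then for γ ∈ (0,2), on the interior state space, div(B·f⃗) = -(3/2)(2-γ)·Ω_V^{-1}Ω^{-3/2} < 0. Hence B is a Dulac function and the system has no periodic orbits in the interior state space. -/
/-- The `Σ`-component of the vector field. -/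
noncomputable def fS (lam gam s w : ℝ) : ℝ :=
  -(2 - (-1 + 3 * s ^ 2 + 3 / 2 * gam * w)) * s + Real.sqrt (3 / 2) * lam * (1 - s ^ 2 - w)

/-- The `Ω`-component of the vector field. -/
noncomputable def fO (gam s w : ℝ) : ℝ :=
  (2 * (1 + (-1 + 3 * s ^ 2 + 3 / 2 * gam * w)) - 3 * gam) * w

/-- The Dulac function `B = Ω_V⁻¹ Ω^{-3/2}`. -/
noncomputable def B (s w : ℝ) : ℝ := (1 - s ^ 2 - w)⁻¹ * w ^ (-(3 : ℝ) / 2)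

set_option maxHeartbeats 1600000 in
/-- `div(B·f⃗) = -(3/2)(2-γ)·Ω_V⁻¹Ω^{-3/2} < 0` on the interior state space, so `B` is a
Dulac function and the system has no (nonconstant) periodic orbits in the interior. -/
theorem stmt_12 (lam gam : ℝ) (hl : 0 ≤ lam) (hg : 0 < gam) (hg2 : gam < 2) :
    (∀ s w : ℝ, s ^ 2 + w < 1 → 0 < w →
      (deriv (fun x => B x w * fS lam gam x w) s + deriv (fun y => B s y * fO gam s y) w
          = -(3 / 2) * (2 - gam) * ((1 - s ^ 2 - w)⁻¹ * w ^ (-(3 : ℝ) / 2)) ∧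
        deriv (fun x => B x w * fS lam gam x w) s + deriv (fun y => B s y * fO gam s y) w
          < 0)) ∧
    (∀ S O : ℝ → ℝ,
      (∀ N, HasDerivAt S (fS lam gam (S N) (O N)) N) →
      (∀ N, HasDerivAt O (fO gam (S N) (O N)) N) →
      (∀ N, S N ^ 2 + O N < 1 ∧ 0 < O N) →
      ∀ T : ℝ, 0 < T → (∀ N, S (N + T) = S N ∧ O (N + T) = O N) →
      ∀ N, S N = S 0 ∧ O N = O 0) := by
  constructor
  ·
    intro s w h1 hw
    have hV : 0 < 1 - s ^ 2 - w := by linarith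
    have hP : 0 < w ^ (-(3 : ℝ) / 2) := Real.rpow_pos_of_pos hw _
    -- derivative in s
    have hx : HasDerivAt (fun x : ℝ => x ^ 2) (2 * s) s := by
      simpa using hasDerivAt_pow 2 s
    have h0 : HasDerivAt (fun x : ℝ => 1 - x ^ 2 - w) (-(2 * s)) s := by
      simpa using (hx.const_sub 1).sub_const w
    have hinv : HasDerivAt (fun x : ℝ => (1 - x ^ 2 - w)⁻¹)
        (-(-(2 * s)) / (1 - s ^ 2 - w) ^ 2) s := h0.inv hV.ne'
    have hB1 : HasDerivAt (fun x : ℝ => (1 - x ^ 2 - w)⁻¹ * w ^ (-(3 : ℝ) / 2))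
        (-(-(2 * s)) / (1 - s ^ 2 - w) ^ 2 * w ^ (-(3 : ℝ) / 2)) s := hinv.mul_const _
    have hq : HasDerivAt (fun x : ℝ => -1 + 3 * x ^ 2 + 3 / 2 * gam * w) (3 * (2 * s)) s := by
      simpa using ((hx.const_mul (3:ℝ)).const_add (-1)).add_const (3 / 2 * gam * w)
    have hA : HasDerivAt (fun x : ℝ => -(2 - (-1 + 3 * x ^ 2 + 3 / 2 * gam * w)))
        (-(-(3 * (2 * s)))) s := (hq.const_sub 2).neg
    have hfS : HasDerivAt (fun x : ℝ =>
        -(2 - (-1 + 3 * x ^ 2 + 3 / 2 * gam * w)) * x + Real.sqrt (3 / 2) * lam * (1 - x ^ 2 - w))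
        (-(-(3 * (2 * s))) * s + -(2 - (-1 + 3 * s ^ 2 + 3 / 2 * gam * w)) * 1 +
          Real.sqrt (3 / 2) * lam * -(2 * s)) s :=
      (hA.mul (hasDerivAt_id s)).add (h0.const_mul _)
    have hD1 := hB1.fun_mul hfS
    -- derivative in w
    have hy0 : HasDerivAt (fun y : ℝ => 1 - s ^ 2 - y) (-1) w := by
      simpa using (hasDerivAt_id w).const_sub (1 - s ^ 2)
    have hyinv : HasDerivAt (fun y : ℝ => (1 - s ^ 2 - y)⁻¹)
        (-(-1) / (1 - s ^ 2 - w) ^ 2) w := hy0.inv hV.ne'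
    have hrpow : HasDerivAt (fun y : ℝ => y ^ (-(3 : ℝ) / 2))
        ((-(3 : ℝ) / 2) * w ^ ((-(3 : ℝ) / 2) - 1)) w :=
      Real.hasDerivAt_rpow_const (Or.inl hw.ne')
    have hB2 := hyinv.fun_mul hrpow
    have hin : HasDerivAt (fun y : ℝ => -1 + 3 * s ^ 2 + 3 / 2 * gam * y) (3 / 2 * gam * 1) w :=
      ((hasDerivAt_id w).const_mul _).const_add _
    have hco : HasDerivAt (fun y : ℝ => 2 * (1 + (-1 + 3 * s ^ 2 + 3 / 2 * gam * y)) - 3 * gam)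
        (2 * (3 / 2 * gam * 1)) w := ((hin.const_add 1).const_mul 2).sub_const _
    have hfO : HasDerivAt (fun y : ℝ =>
        (2 * (1 + (-1 + 3 * s ^ 2 + 3 / 2 * gam * y)) - 3 * gam) * y)
        (2 * (3 / 2 * gam * 1) * w +
          (2 * (1 + (-1 + 3 * s ^ 2 + 3 / 2 * gam * w)) - 3 * gam) * 1) w :=
      hco.mul (hasDerivAt_id w)
    have hD2 := hB2.fun_mul hfO
    have hkey : deriv (fun x => B x w * fS lam gam x w) s + deriv (fun y => B s y * fO gam s y) w
        = -(3 / 2) * (2 - gam) * ((1 - s ^ 2 - w)⁻¹ * w ^ (-(3 : ℝ) / 2)) := by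
      simp only [B, fS, fO]
      rw [hD1.deriv, hD2.deriv, Real.rpow_sub_one hw.ne']
      field_simp
      ring
    refine ⟨hkey, ?_⟩
    rw [hkey]
    have hpos : 0 < (1 - s ^ 2 - w)⁻¹ * w ^ (-(3 : ℝ) / 2) := mul_pos (inv_pos.2 hV) hP
    nlinarith

  ·
    intro S O hS hO hin T hT hper
    set R : ℝ := Real.sqrt (3 / 2) with hRdef
    have hR2 : R ^ 2 = 3 / 2 := Real.sq_sqrt (by norm_num)
    have hR0 : 0 < R := Real.sqrt_pos.mpr (by norm_num)
    have hVpos : ∀ N, 0 < 1 - S N ^ 2 - O N := fun N => by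
      have h1 := (hin N).1; linarith
    have hOpos : ∀ N, 0 < O N := fun N => (hin N).2
    have hS1 : ∀ N, S N < 1 := fun N => by
      nlinarith [(hin N).1, (hin N).2, sq_nonneg (S N - 1)]
    have hVd : ∀ N, HasDerivAt (fun n => 1 - S n ^ 2 - O n)
        (-(2 * S N * fS lam gam (S N) (O N)) - fO gam (S N) (O N)) N := fun N => by
      have h2 : HasDerivAt (fun n => S n ^ 2) (2 * S N * fS lam gam (S N) (O N)) N := by
        simpa using (hS N).fun_pow 2
      exact (h2.const_sub 1).sub (hO N)
    have hlogV : ∀ N, HasDerivAt (fun n => Real.log (1 - S n ^ 2 - O n))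
        ((-(2 * S N * fS lam gam (S N) (O N)) - fO gam (S N) (O N)) / (1 - S N ^ 2 - O N)) N :=
      fun N => (hVd N).log (hVpos N).ne'
    have hlogO : ∀ N, HasDerivAt (fun n => Real.log (O n))
        (fO gam (S N) (O N) / O N) N := fun N => (hO N).log (hOpos N).ne'
    rcases le_or_gt (2 * lam ^ 2) (3 * gam ^ 2) with hcase | hcase
    · -- Case 1 : no periodic solutions at all
      exfalso
      have hud : ∀ N, HasDerivAt (fun n => Real.log (1 - S n ^ 2 - O n) - Real.log (O n))
          (3 * gam - 2 * R * lam * S N) N := fun N => by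
        have h := (hlogV N).fun_sub (hlogO N)
        refine h.congr_deriv (Eq.symm ?_)
        have hV := hVpos N; have hO' := hOpos N
        simp only [fS, fO]
        rw [← hRdef]
        field_simp
        ring
      have hmono : StrictMono (fun n => Real.log (1 - S n ^ 2 - O n) - Real.log (O n)) := by
        apply strictMono_of_deriv_pos
        intro N
        rw [(hud N).deriv]
        rcases hl.eq_or_lt with h0 | h0
        · have hz : 2 * R * lam * S N = 0 := by rw [← h0]; ring
          linarith
        · have hb : 2 * R * lam ≤ 3 * gam := by
            nlinarith [hcase, hg, mul_pos hR0 h0, sq_nonneg lam, hR2,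
              sq_nonneg (2 * R * lam - 3 * gam)]
          have hlt : 2 * R * lam * S N < 2 * R * lam * 1 :=
            mul_lt_mul_of_pos_left (hS1 N) (by positivity)
          nlinarith
      have hp := hper 0
      rw [zero_add] at hp
      have heq : Real.log (1 - S T ^ 2 - O T) - Real.log (O T)
          = Real.log (1 - S 0 ^ 2 - O 0) - Real.log (O 0) := by rw [hp.1, hp.2]
      exact (hmono hT).ne' heq
    · -- Case 2 : Lyapunov function
      have hlam : 0 < lam := by
        rcases hl.eq_or_lt with h0 | h0
        · exfalso; rw [← h0] at hcase; nlinarith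
        · exact h0
      have hk : ∀ N, 0 < lam - R * gam * S N := fun N => by
        have h1 : R * gam < lam := by
          nlinarith [hcase, hg, hlam, mul_pos hR0 hg, sq_nonneg gam, hR2,
            sq_nonneg (R * gam - lam)]
        have h2 : R * gam * S N < R * gam * 1 :=
          mul_lt_mul_of_pos_left (hS1 N) (by positivity)
        nlinarith
      have hlogk : ∀ N, HasDerivAt (fun n => Real.log (lam - R * gam * S n))
          (-(R * gam * fS lam gam (S N) (O N)) / (lam - R * gam * S N)) N := fun N => by
        have h0 : HasDerivAt (fun n => lam - R * gam * S n)
            (-(R * gam * fS lam gam (S N) (O N))) N := by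
          simpa using ((hS N).const_mul (R * gam)).const_sub lam
        exact h0.log (hk N).ne'
      set L : ℝ → ℝ := fun n => -(3 * gam * (2 - gam)) * Real.log (1 - S n ^ 2 - O n)
          + (6 * gam - 2 * lam ^ 2) * Real.log (O n)
          + 2 * (2 * lam ^ 2 - 3 * gam ^ 2) * Real.log (lam - R * gam * S n) with hLdef
      have hLd : ∀ N, HasDerivAt L
          (-(lam * (2 - gam) * (3 * gam - 2 * R * lam * S N) ^ 2) / (lam - R * gam * S N)) N :=
        fun N => by
        have h := (((hlogV N).const_mul (-(3 * gam * (2 - gam)))).fun_add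
            ((hlogO N).const_mul (6 * gam - 2 * lam ^ 2))).fun_add
            ((hlogk N).const_mul (2 * (2 * lam ^ 2 - 3 * gam ^ 2)))
        refine h.congr_deriv (Eq.symm ?_)
        have hV := hVpos N; have hO' := hOpos N; have hkN := hk N
        simp only [← mul_div_assoc]
        rw [div_add_div _ _ hV.ne' hO'.ne', div_add_div _ _ (mul_ne_zero hV.ne' hO'.ne') hkN.ne',
          div_eq_div_iff hkN.ne' (mul_ne_zero (mul_ne_zero hV.ne' hO'.ne') hkN.ne')]
        simp only [fS, fO]
        rw [← hRdef]
        linear_combination (-(lam - R * gam * S N) * (2 * lam * O N * (2 * lam ^ 2 - 3 * gam ^ 2) *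
          (-gam * (1 - O N) ^ 2 + (S N) ^ 2 * (1 - O N) * (2 + gam) - 2 * (S N) ^ 4))) * hR2
      have hLle : ∀ N, deriv L N ≤ 0 := fun N => by
        rw [(hLd N).deriv]
        apply div_nonpos_of_nonpos_of_nonneg
        · have h2g : (0:ℝ) ≤ 2 - gam := by linarith
          have : 0 ≤ lam * (2 - gam) * (3 * gam - 2 * R * lam * S N) ^ 2 :=
            mul_nonneg (mul_nonneg hlam.le h2g) (sq_nonneg _)
          linarith
        · exact (hk N).le
      have hanti : Antitone L :=
        antitone_of_deriv_nonpos (fun N => (hLd N).differentiableAt) hLle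
      have hperS : Function.Periodic S T := fun x => (hper x).1
      have hperO : Function.Periodic O T := fun x => (hper x).2
      have hperL : Function.Periodic L T := fun x => by
        simp only [hLdef]
        rw [hperS x, hperO x]
      have hconst : ∀ x y : ℝ, L x = L y := by
        have key : ∀ x y : ℝ, x ≤ y → L x = L y := by
          intro x y hxy
          refine le_antisymm ?_ (hanti hxy)
          obtain ⟨n, hn⟩ := exists_nat_gt ((y - x) / T)
          have hxn : y ≤ x + n * T := by
            have := (div_lt_iff₀ hT).mp hn
            nlinarith
          calc L x = L (x + n * T) := ((hperL.nat_mul n) x).symm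
            _ ≤ L y := hanti hxn
        intro x y
        rcases le_total x y with h | h
        · exact key x y h
        · exact (key y x h).symm
      have hg0 : ∀ N, 3 * gam - 2 * R * lam * S N = 0 := by
        intro N
        have hz : deriv L N = 0 := by
          have hLfun : L = fun _ => L 0 := funext fun x => hconst x 0
          rw [hLfun]
          exact deriv_const _ _
        rw [(hLd N).deriv] at hz
        have hnum : -(lam * (2 - gam) * (3 * gam - 2 * R * lam * S N) ^ 2) = 0 :=
          (div_eq_zero_iff.mp hz).resolve_right (hk N).ne'
        have hsq : (3 * gam - 2 * R * lam * S N) ^ 2 = 0 := by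
          have h2g : 0 < 2 - gam := by linarith
          have := sq_nonneg (3 * gam - 2 * R * lam * S N)
          nlinarith [mul_pos hlam h2g]
        exact pow_eq_zero_iff (by norm_num : (2:ℕ) ≠ 0) |>.mp hsq
      have hSc : ∀ N, S N = S 0 := fun N => by
        have h1 := hg0 N; have h2 := hg0 0
        have h2Rl : (0:ℝ) < 2 * R * lam := by positivity
        have : 2 * R * lam * S N = 2 * R * lam * S 0 := by linarith
        exact mul_left_cancel₀ h2Rl.ne' this
      have hSfun : S = fun _ => S 0 := funext hSc
      have hfS0 : ∀ N, fS lam gam (S 0) (O N) = 0 := fun N => by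
        have hconstS : HasDerivAt S 0 N := by rw [hSfun]; exact hasDerivAt_const N (S 0)
        have h := (hS N).unique hconstS
        rwa [hSc N] at h
      have hOc : ∀ N, O N = O 0 := fun N => by
        have h1 := hfS0 N; have h2 := hfS0 0
        simp only [fS] at h1 h2
        rw [← hRdef] at h1 h2
        have hdiff : (3 / 2 * gam * S 0 - R * lam) * (O N - O 0) = 0 := by
          linear_combination h1 - h2
        rcases mul_eq_zero.mp hdiff with h | h
        · exfalso
          have hgz := hg0 0
          have hkey : 3 * gam * (S 0) ^ 2 = 3 * gam := by
            linear_combination 2 * (S 0) * h - hgz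
          have h5 : (S 0) ^ 2 < 1 := by nlinarith [(hin 0).1, (hin 0).2]
          nlinarith
        · linarith
      exact fun N => ⟨hSc N, hOc N⟩
end

section
/- More generally, with the ansatz B(Σ,Ω) = Ω_V^{-a}Ω^{-b}, one has the identity div(B f⃗) = B·[(3/2)(5-2a-2b)(γΩ + 2Σ²) + √6 λ(a-1)Σ - 3(1+γ-bγ)] on the interior state space. -/
/-- The Dulac ansatz `B = Ω_V^{-a} Ω^{-b}`. -/
noncomputable def Bab (a b s w : ℝ) : ℝ := (1 - s ^ 2 - w) ^ (-a) * w ^ (-b)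

lemma cubic_hasDerivAt (A B C D x : ℝ) :
    HasDerivAt (fun t : ℝ => A * t ^ 3 + B * t ^ 2 + C * t + D)
      (3 * A * x ^ 2 + 2 * B * x + C) x := by
  have h3 := (hasDerivAt_pow 3 x).const_mul A
  have h2 := (hasDerivAt_pow 2 x).const_mul B
  have h1 := ((hasDerivAt_id x).const_mul C).add_const D
  have : HasDerivAt (fun t : ℝ => A * t ^ 3 + B * t ^ 2 + (C * id t + D)) _ x := (h3.add h2).add h1
  convert this using 1
  · funext t; simp only [id]; ring
  · push_cast; ring

lemma sqrt6_eq : Real.sqrt 6 = 2 * Real.sqrt (3 / 2) := by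
  rw [show (6 : ℝ) = 2 ^ 2 * (3 / 2) by norm_num, Real.sqrt_mul (by positivity),
    Real.sqrt_sq (by norm_num)]

/-- With the ansatz `B = Ω_V^{-a}Ω^{-b}`, the divergence identity
`div(B f⃗) = B·[(3/2)(5-2a-2b)(γΩ + 2Σ²) + √6 λ(a-1)Σ - 3(1+γ-bγ)]` holds on the
interior state space. -/
theorem stmt_13 (lam gam a b : ℝ) (hl : 0 ≤ lam) (hg : 0 < gam) (hg2 : gam < 2) :
    ∀ s w : ℝ, s ^ 2 + w < 1 → 0 < w →
      deriv (fun x => Bab a b x w * fS lam gam x w) s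
          + deriv (fun y => Bab a b s y * fO gam s y) w
        = Bab a b s w * (3 / 2 * (5 - 2 * a - 2 * b) * (gam * w + 2 * s ^ 2)
            + Real.sqrt 6 * lam * (a - 1) * s - 3 * (1 + gam - b * gam)) := by
  intro s w hsw hw
  have hVpos : (0 : ℝ) < 1 - s ^ 2 - w := by linarith
  -- derivative in the x (Σ) direction
  have hV1 : HasDerivAt (fun x : ℝ => 1 - x ^ 2 - w) (-(2 * s)) s := by
    simpa using (((hasDerivAt_pow 2 s).const_sub 1).sub_const w)
  have hB1 : HasDerivAt (fun x : ℝ => (1 - x ^ 2 - w) ^ (-a))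
      (-(2 * s) * -a * (1 - s ^ 2 - w) ^ (-a - 1)) s :=
    hV1.rpow_const (Or.inl hVpos.ne')
  have hfS : HasDerivAt (fun x : ℝ => fS lam gam x w)
      (3 * 3 * s ^ 2 + 2 * -(Real.sqrt (3 / 2) * lam) * s + (3 / 2 * gam * w - 3)) s := by
    have h := cubic_hasDerivAt 3 (-(Real.sqrt (3 / 2) * lam)) (3 / 2 * gam * w - 3)
      (Real.sqrt (3 / 2) * lam * (1 - w)) s
    convert h using 2 with x
    unfold fS
    ring
  have hx : HasDerivAt (fun x => Bab a b x w * fS lam gam x w)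
      ((-(2 * s) * -a * (1 - s ^ 2 - w) ^ (-a - 1) * w ^ (-b)) * fS lam gam s w
        + ((1 - s ^ 2 - w) ^ (-a) * w ^ (-b)) *
          (3 * 3 * s ^ 2 + 2 * -(Real.sqrt (3 / 2) * lam) * s + (3 / 2 * gam * w - 3))) s := by
    have : HasDerivAt (fun x => (1 - x ^ 2 - w) ^ (-a) * w ^ (-b) * fS lam gam x w) _ s :=
      (hB1.mul_const (w ^ (-b))).mul hfS
    simpa [Bab] using this
  -- derivative in the y (Ω) direction
  have hV2 : HasDerivAt (fun y : ℝ => 1 - s ^ 2 - y) (-1) w := by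
    simpa using ((hasDerivAt_id w).const_sub (1 - s ^ 2))
  have hB2 : HasDerivAt (fun y : ℝ => (1 - s ^ 2 - y) ^ (-a))
      (-1 * -a * (1 - s ^ 2 - w) ^ (-a - 1)) w :=
    hV2.rpow_const (Or.inl hVpos.ne')
  have hwb : HasDerivAt (fun y : ℝ => y ^ (-b)) (-b * w ^ (-b - 1)) w := by
    simpa using Real.hasDerivAt_rpow_const (x := w) (p := -b) (Or.inl hw.ne')
  have hfO : HasDerivAt (fun y : ℝ => fO gam s y)
      (3 * 0 * w ^ 2 + 2 * (3 * gam) * w + (6 * s ^ 2 - 3 * gam)) w := by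
    have h := cubic_hasDerivAt 0 (3 * gam) (6 * s ^ 2 - 3 * gam) 0 w
    convert h using 2 with y
    unfold fO
    ring
  have hy : HasDerivAt (fun y => Bab a b s y * fO gam s y)
      ((-1 * -a * (1 - s ^ 2 - w) ^ (-a - 1) * w ^ (-b)
          + (1 - s ^ 2 - w) ^ (-a) * (-b * w ^ (-b - 1))) * fO gam s w
        + ((1 - s ^ 2 - w) ^ (-a) * w ^ (-b)) *
          (3 * 0 * w ^ 2 + 2 * (3 * gam) * w + (6 * s ^ 2 - 3 * gam))) w := by
    have : HasDerivAt (fun y => (1 - s ^ 2 - y) ^ (-a) * y ^ (-b) * fO gam s y) _ w :=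
      (hB2.mul hwb).mul hfO
    simpa [Bab] using this
  rw [hx.deriv, hy.deriv]
  have e1 : (1 - s ^ 2 - w) ^ (-a)
      = (1 - s ^ 2 - w) ^ (-a - 1) * (1 - s ^ 2 - w) := by
    rw [← Real.rpow_add_one hVpos.ne' (-a - 1)]; ring_nf
  have e2 : w ^ (-b) = w ^ (-b - 1) * w := by
    rw [← Real.rpow_add_one hw.ne' (-b - 1)]; ring_nf
  simp only [Bab, fS, fO, e1, e2, sqrt6_eq]
  ring
end

section
/- The linearization of the system at the fixed point P = (λ/√6, 0) (where 0 ≤ λ² < 6) has eigenvalues -(6-λ²)/2 and -(3γ-λ²). In particular P is a stable node when λ² < 3γ and a saddle when 3γ < λ² < 6. -/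
/-- The Jacobian matrix of the vector field at `(s,w)`. -/
noncomputable def Jac (lam gam s w : ℝ) : Matrix (Fin 2) (Fin 2) ℝ :=
  !![deriv (fun x => fS lam gam x w) s, deriv (fun y => fS lam gam s y) w;
     deriv (fun x => fO gam x w) s, deriv (fun y => fO gam s y) w]

/-- The linearization at `P = (λ/√6, 0)` (for `0 ≤ λ² < 6`) has eigenvalues `-(6-λ²)/2`
and `-(3γ-λ²)`; `P` is a stable node when `λ² < 3γ` and a saddle when `3γ < λ² < 6`. -/
theorem stmt_15 (lam gam : ℝ) (hl : 0 ≤ lam) (hl6 : lam ^ 2 < 6)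
    (hg : 0 < gam) (hg2 : gam < 2) :
    (∀ μ : ℝ, (Jac lam gam (lam / Real.sqrt 6) 0
        - μ • (1 : Matrix (Fin 2) (Fin 2) ℝ)).det = 0 ↔
      μ = -(6 - lam ^ 2) / 2 ∨ μ = -(3 * gam - lam ^ 2)) ∧
    (lam ^ 2 < 3 * gam → -(6 - lam ^ 2) / 2 < 0 ∧ -(3 * gam - lam ^ 2) < 0) ∧
    (3 * gam < lam ^ 2 → -(6 - lam ^ 2) / 2 < 0 ∧ 0 < -(3 * gam - lam ^ 2)) := by
  have h6pos : (0:ℝ) < Real.sqrt 6 := Real.sqrt_pos.mpr (by norm_num)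
  have h6 : Real.sqrt 6 * Real.sqrt 6 = 6 := Real.mul_self_sqrt (by norm_num)
  have h32 : Real.sqrt (3/2) = Real.sqrt 6 / 2 := by
    rw [show (3/2:ℝ) = 6/4 by norm_num, Real.sqrt_div (by norm_num : (0:ℝ) ≤ 6),
      show Real.sqrt 4 = 2 by rw [show (4:ℝ) = 2^2 by norm_num, Real.sqrt_sq (by norm_num)]]
  set s0 : ℝ := lam / Real.sqrt 6 with hs0def
  have hs0sq : s0 ^ 2 = lam ^ 2 / 6 := by
    rw [hs0def, div_pow, Real.sq_sqrt (by norm_num : (0:ℝ) ≤ 6)]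
  -- entry (0,0)
  have h1 : HasDerivAt (fun x:ℝ => x^2) (2*s0) s0 := by simpa using hasDerivAt_pow 2 s0
  have hA00 : deriv (fun x => fS lam gam x 0) s0 = -(6 - lam ^ 2) / 2 := by
    have hf := ((((((h1.const_mul 3).const_add (-1)).add_const (3/2*gam*0)).const_sub 2).neg.mul
        (hasDerivAt_id s0)).add
        (((h1.const_sub 1).sub_const 0).const_mul (Real.sqrt (3/2)*lam)))
    have hfs : HasDerivAt (fun x:ℝ => fS lam gam x 0) (-(6 - lam ^ 2) / 2) s0 := by
      simp only [fS]
      refine hf.congr_deriv (Eq.symm ?_)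
      simp only [id_eq, h32, Pi.neg_apply]
      rw [hs0def]
      field_simp
      nlinarith [h6, sq_nonneg lam]
    exact hfs.deriv
  -- entry (1,0)
  have hA10 : deriv (fun x => fO gam x 0) s0 = 0 := by
    have : (fun x => fO gam x 0) = fun _ : ℝ => (0:ℝ) := by funext x; simp [fO]
    rw [this, deriv_const]
  -- entry (1,1)
  have hA11 : deriv (fun y => fO gam s0 y) 0 = -(3 * gam - lam ^ 2) := by
    have hg' := (((((hasDerivAt_id (0:ℝ)).const_mul (3/2*gam)).const_add
        (-1 + 3*s0^2)).const_add 1).const_mul 2).sub_const (3*gam)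
    have hf := hg'.mul (hasDerivAt_id (0:ℝ))
    have hfs : HasDerivAt (fun y:ℝ => fO gam s0 y) (-(3 * gam - lam ^ 2)) 0 := by
      simp only [fO]
      refine hf.congr_deriv (Eq.symm ?_)
      simp only [id_eq]
      rw [hs0sq]
      ring
    exact hfs.deriv
  refine ⟨fun μ => ?_, fun h => ⟨by nlinarith, by nlinarith⟩, fun h => ⟨by nlinarith, by nlinarith⟩⟩
  have hdet : (Jac lam gam s0 0 - μ • (1 : Matrix (Fin 2) (Fin 2) ℝ)).det
      = (-(6 - lam ^ 2) / 2 - μ) * (-(3 * gam - lam ^ 2) - μ) := by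
    simp [Jac, Matrix.det_fin_two, Matrix.sub_apply, Matrix.smul_apply, Matrix.one_apply,
      hA00, hA10, hA11]
  rw [hdet, mul_eq_zero, sub_eq_zero, sub_eq_zero, eq_comm, @eq_comm _ _ μ]
end

section
/- The linearization at the scaling fixed point S = (√(3/2)γ/λ, 1-3γ/λ²) (for λ² > 3γ, γ ∈ (0,2)) has eigenvalues -(3/4)(2-γ)(1 ± √r), where r = [24γ² - (9γ-2)λ²]/[λ²(2-γ)]. Both eigenvalues have negative real part; in particular S is a stable node when 3γ < λ² < 24γ²/(9γ-2) (for 9γ > 2) and a stable spiral (r < 0) when λ² > 24γ²/(9γ-2). -/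
lemma deriv_cubic (a b c d x : ℝ) :
    deriv (fun t : ℝ => a*t^3 + b*t^2 + c*t + d) x = 3*a*x^2 + 2*b*x + c := by
  have h1 := (hasDerivAt_pow 3 x).const_mul a
  have h2 := (hasDerivAt_pow 2 x).const_mul b
  have h3 := (hasDerivAt_id' x).const_mul c
  have h4 := hasDerivAt_const x d
  have h := ((h1.add h2).add h3).add h4
  refine h.deriv.trans ?_; push_cast; ring

set_option maxHeartbeats 1000000 in
/-- The linearization at the scaling point `S = (√(3/2)γ/λ, 1-3γ/λ²)` has (complex)
eigenvalues `-(3/4)(2-γ)(1 ± √r)` with `r = [24γ² - (9γ-2)λ²]/[λ²(2-γ)]`; both have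
negative real part; `r > 0` (stable node) when `3γ < λ² < 24γ²/(9γ-2)` with `9γ > 2`,
and `r < 0` (stable spiral) when `λ² > 24γ²/(9γ-2)` with `9γ > 2`. -/
theorem stmt_16 (lam gam r : ℝ) (hl : 0 < lam) (hg : 0 < gam) (hg2 : gam < 2)
    (hlg : 3 * gam < lam ^ 2)
    (hr : r = (24 * gam ^ 2 - (9 * gam - 2) * lam ^ 2) / (lam ^ 2 * (2 - gam))) :
    (∀ μ : ℂ, ((Jac lam gam (Real.sqrt (3 / 2) * (gam / lam)) (1 - 3 * gam / lam ^ 2)).map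
          (Complex.ofReal) - μ • (1 : Matrix (Fin 2) (Fin 2) ℂ)).det = 0 ↔
      μ = -(3 / 4 : ℂ) * (2 - (gam : ℂ)) * (1 + (r : ℂ) ^ ((1 : ℂ) / 2)) ∨
      μ = -(3 / 4 : ℂ) * (2 - (gam : ℂ)) * (1 - (r : ℂ) ^ ((1 : ℂ) / 2))) ∧
    ((-(3 / 4 : ℂ) * (2 - (gam : ℂ)) * (1 + (r : ℂ) ^ ((1 : ℂ) / 2))).re < 0 ∧
      (-(3 / 4 : ℂ) * (2 - (gam : ℂ)) * (1 - (r : ℂ) ^ ((1 : ℂ) / 2))).re < 0) ∧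
    (2 < 9 * gam → lam ^ 2 < 24 * gam ^ 2 / (9 * gam - 2) → 0 < r) ∧
    (2 < 9 * gam → 24 * gam ^ 2 / (9 * gam - 2) < lam ^ 2 → r < 0) := by
  have hln : lam ≠ 0 := ne_of_gt hl
  have h2g : (0:ℝ) < 2 - gam := by linarith
  have h2g' : (2:ℝ) - gam ≠ 0 := ne_of_gt h2g
  -- parts 3, 4 and r < 1
  have part3 : 2 < 9 * gam → lam ^ 2 < 24 * gam ^ 2 / (9 * gam - 2) → 0 < r := by
    intro h1 h2
    rw [hr]
    apply div_pos _ (by positivity)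
    rw [lt_div_iff₀ (by linarith)] at h2; nlinarith
  have part4 : 2 < 9 * gam → 24 * gam ^ 2 / (9 * gam - 2) < lam ^ 2 → r < 0 := by
    intro h1 h2
    rw [hr]
    apply div_neg_of_neg_of_pos _ (by positivity)
    rw [div_lt_iff₀ (by linarith)] at h2; nlinarith
  have hr1 : r < 1 := by
    rw [hr, div_lt_one (by positivity)]; nlinarith
  set q := Real.sqrt (3/2) with hqdef
  have hq : q^2 = 3/2 := Real.sq_sqrt (by norm_num)
  set s0 := q * (gam / lam) with hs0
  set w0 := 1 - 3 * gam / lam ^ 2 with hw0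
  have hs0sq : s0^2 = 3/2*(gam^2/lam^2) := by rw [hs0, mul_pow, hq]; ring
  have hqls : q*lam*s0 = 3/2*gam := by
    rw [hs0]; field_simp; linear_combination 2*hq
  -- Jacobian entries
  have e11 : deriv (fun x => fS lam gam x w0) s0
      = -3 + 9*s0^2 + 3/2*gam*w0 - 2*(q*lam*s0) := by
    have hfun : (fun x => fS lam gam x w0)
        = fun x => 3*x^3 + (-(q*lam))*x^2 + (-3 + 3/2*gam*w0)*x + q*lam*(1-w0) := by
      funext x; simp only [fS, hqdef]; ring
    rw [hfun, deriv_cubic]; ring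
  have e12 : deriv (fun y => fS lam gam s0 y) w0 = 3/2*gam*s0 - q*lam := by
    have hfun : (fun y => fS lam gam s0 y)
        = fun y => 0*y^3 + 0*y^2 + (3/2*gam*s0 - q*lam)*y
            + (-(2 - (-1 + 3*s0^2))*s0 + q*lam*(1 - s0^2)) := by
      funext y; simp only [fS, hqdef]; ring
    rw [hfun, deriv_cubic]; ring
  have e21 : deriv (fun x => fO gam x w0) s0 = 12*s0*w0 := by
    have hfun : (fun x => fO gam x w0)
        = fun x => 0*x^3 + (6*w0)*x^2 + 0*x + (3*gam*w0 - 3*gam)*w0 := by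
      funext x; simp only [fO]; ring
    rw [hfun, deriv_cubic]; ring
  have e22 : deriv (fun y => fO gam s0 y) w0 = 6*s0^2 + 6*gam*w0 - 3*gam := by
    have hfun : (fun y => fO gam s0 y)
        = fun y => 0*y^3 + (3*gam)*y^2 + (6*s0^2 - 3*gam)*y + 0 := by
      funext y; simp only [fO]; ring
    rw [hfun, deriv_cubic]; ring
  set A : ℝ := -3 + 9*s0^2 + 3/2*gam*w0 - 2*(q*lam*s0) with hA
  set B : ℝ := 3/2*gam*s0 - q*lam with hB
  set C : ℝ := 12*s0*w0 with hC
  set D : ℝ := 6*s0^2 + 6*gam*w0 - 3*gam with hD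
  have hJ : Jac lam gam s0 w0 = !![A, B; C, D] := by
    rw [Jac]; rw [e11, e12, e21, e22]
  -- algebraic identities
  have ha' : A = -3 - 3/2*gam + 9*(gam^2/lam^2) := by
    rw [hA, hw0]; linear_combination 9*hs0sq - 2*hqls
  have hd2 : D = 3*gam - 9*(gam^2/lam^2) := by
    rw [hD, hw0]; linear_combination 6*hs0sq
  have hbc : B*C = 27*(gam^3/lam^2)*w0 - 18*gam*w0 := by
    rw [hB, hC]; linear_combination (18*gam*w0)*hs0sq - (12*w0)*hqls
  have hsum : A + D = -3 + 3/2*gam := by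
    rw [ha', hd2]; ring
  have hprod : A*D - B*C = 9/16*(2-gam)^2*(1-r) := by
    rw [ha', hd2, hbc, hw0, hr]; field_simp; ring
  -- complex square root
  set z : ℂ := (r : ℂ) ^ ((1:ℂ)/2) with hz
  have hz2 : z^2 = (r:ℂ) := by
    have h := Complex.cpow_nat_inv_pow (r:ℂ) (n := 2) two_ne_zero
    rw [hz, show ((1:ℂ)/2) = (((2:ℕ):ℂ))⁻¹ by norm_num]
    exact h
  set μp : ℂ := -(3/4 : ℂ) * (2 - (gam:ℂ)) * (1 + z) with hmp
  set μm : ℂ := -(3/4 : ℂ) * (2 - (gam:ℂ)) * (1 - z) with hmm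
  have hsumC : (A:ℂ) + (D:ℂ) = -3 + 3/2*(gam:ℂ) := by
    rw [← Complex.ofReal_add, hsum]; push_cast; ring
  have hprodC : (A:ℂ)*(D:ℂ) - (B:ℂ)*(C:ℂ) = 9/16*(2-(gam:ℂ))^2*(1-(r:ℂ)) := by
    rw [← Complex.ofReal_mul, ← Complex.ofReal_mul, ← Complex.ofReal_sub, hprod]
    push_cast; ring
  -- z.re bounds
  have him : 2 * (z.re * z.im) = 0 := by
    have := congrArg Complex.im hz2
    simpa [pow_two, Complex.mul_im, mul_comm] using this
  have hre : z.re^2 - z.im^2 = r := by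
    have := congrArg Complex.re hz2
    simpa [pow_two, Complex.mul_re, pow_two] using this
  have hzre : z.re^2 < 1 := by
    rcases mul_eq_zero.mp (by linarith : z.re * z.im = 0) with h | h
    · rw [h]; norm_num
    · rw [h] at hre; nlinarith
  have hb1 : (0:ℝ) < 1 + z.re := by nlinarith
  have hb2 : (0:ℝ) < 1 - z.re := by nlinarith
  -- re of eigenvalues
  have hrep : μp.re = -(3/4) * (2 - gam) * (1 + z.re) := by
    rw [hmp]
    simp [Complex.mul_re, Complex.mul_im, Complex.add_re, Complex.add_im,
      Complex.sub_re, Complex.sub_im, Complex.ofReal_re, Complex.ofReal_im]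
  have hrem : μm.re = -(3/4) * (2 - gam) * (1 - z.re) := by
    rw [hmm]
    simp [Complex.mul_re, Complex.mul_im, Complex.add_re, Complex.add_im,
      Complex.sub_re, Complex.sub_im, Complex.ofReal_re, Complex.ofReal_im]
  refine ⟨?_, ⟨?_, ?_⟩, part3, part4⟩
  · intro μ
    have hdet : ((Jac lam gam s0 w0).map Complex.ofReal - μ • (1 : Matrix (Fin 2) (Fin 2) ℂ)).det
        = ((A:ℂ) - μ) * ((D:ℂ) - μ) - (B:ℂ)*(C:ℂ) := by
      rw [hJ]
      simp [Matrix.det_fin_two, Matrix.map_apply, Matrix.sub_apply, Matrix.smul_apply,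
        Matrix.one_apply]
    have hfac : ((A:ℂ) - μ) * ((D:ℂ) - μ) - (B:ℂ)*(C:ℂ) = (μ - μp) * (μ - μm) := by
      rw [hmp, hmm]
      linear_combination hprodC - μ*hsumC + (9/16)*(2-(gam:ℂ))^2*hz2
    rw [hdet, hfac, mul_eq_zero, sub_eq_zero, sub_eq_zero]
  · rw [hrep]
    have : (0:ℝ) < 3/4 * (2 - gam) * (1 + z.re) := by positivity
    linarith
  · rw [hrem]
    have : (0:ℝ) < 3/4 * (2 - gam) * (1 - z.re) := by positivity
    linarith
end
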